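/- arXiv:1406.6528 — 12 statements merged into one kernel-verified Lean document; each statement's English description precedes it below -/
import Mathlib

section
/- Let G : G₁ → G₀ be a crossed module whose boundary map d is surjective (i.e. G is simply connected). Then the displacement subgroup D_{G₀}(G₁) equals the commutator subgroup [G₁, G₁] of the group G₁. -/
open scoped commutatorElement

/-- A crossed module `d : G₁ → G₀` with action `act : G₀ → Aut(G₁)`. -/
structure XMod (G₁ G₀ : Type*) [Group G₁] [Group G₀] where
  d : G₁ →* G₀
  act : G₀ →* MulAut G₁
  cm1 : ∀ (g₀ : G₀) (g₁ : G₁), d (act g₀ g₁) = g₀ * d g₁ * g₀⁻¹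
  cm2 : ∀ (g₁ g₁' : G₁), act (d g₁) g₁' = g₁ * g₁' * g₁⁻¹

/-- The commutator `⁅x, y⁆` lies in the commutator subgroup. -/
lemma mem_commutator_of {G : Type*} [Group G] (x y : G) : ⁅x, y⁆ ∈ commutator G := by
  rw [commutator_def]
  exact Subgroup.commutator_mem_commutator (Subgroup.mem_top x) (Subgroup.mem_top y)

namespace XMod

variable {G₁ G₀ : Type*} [Group G₁] [Group G₀] (X : XMod G₁ G₀)

lemma act_act (a b : G₀) (x : G₁) : X.act a (X.act b x) = X.act (a * b) x := by
  rw [map_mul]; rfl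

lemma act_one (x : G₁) : X.act 1 x = x := by rw [map_one]; rfl

/-- The fixed-point subgroup `G₁^{G₀}`. -/
def fix : Subgroup G₁ where
  carrier := {g₁ | ∀ g₀ : G₀, X.act g₀ g₁ = g₁}
  one_mem' := fun g₀ => map_one (X.act g₀)
  mul_mem' := fun {a b} ha hb g₀ => by rw [map_mul, ha g₀, hb g₀]
  inv_mem' := fun {a} ha g₀ => by rw [map_inv, ha g₀]

lemma mem_fix {g₁ : G₁} : g₁ ∈ X.fix ↔ ∀ g₀ : G₀, X.act g₀ g₁ = g₁ := Iff.rfl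

/-- The stabilizer `St_{G₀}(G₁)`. -/
def stab : Subgroup G₀ where
  carrier := {g₀ | ∀ g₁ : G₁, X.act g₀ g₁ = g₁}
  one_mem' := fun g₁ => X.act_one g₁
  mul_mem' := fun {a b} ha hb g₁ => by rw [← X.act_act, hb g₁, ha g₁]
  inv_mem' := fun {a} ha g₁ => by
    have h := X.act_act a⁻¹ a g₁
    rw [ha g₁] at h
    simpa [X.act_one] using h

lemma mem_stab {g₀ : G₀} : g₀ ∈ X.stab ↔ ∀ g₁ : G₁, X.act g₀ g₁ = g₁ := Iff.rfl

/-- `St_{G₀}(G₁) ∩ Z(G₀)`. -/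
def zstab : Subgroup G₀ := X.stab ⊓ Subgroup.center G₀

lemma fix_le_center : X.fix ≤ Subgroup.center G₁ := fun h hh =>
  Subgroup.mem_center_iff.mpr fun g => by
    have h1 := X.cm2 g h
    rw [hh (X.d g)] at h1
    exact mul_inv_eq_iff_eq_mul.mp h1.symm

instance fix_normal : (X.fix).Normal := ⟨fun n hn g => by
  rw [Subgroup.mem_center_iff.mp (X.fix_le_center hn) g]
  simpa using hn⟩

instance zstab_normal : (X.zstab).Normal := ⟨fun n hn g => by
  rw [Subgroup.mem_center_iff.mp (Subgroup.mem_inf.mp hn).2 g]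
  simpa using hn⟩

/-- The displacement subgroup `D_{G₀}(G₁)`. -/
def disp : Subgroup G₁ :=
  Subgroup.closure {x | ∃ (g₀ : G₀) (g₁ : G₁), x = X.act g₀ g₁ * g₁⁻¹}

lemma disp_gen_mem (g₀ : G₀) (g₁ : G₁) : X.act g₀ g₁ * g₁⁻¹ ∈ X.disp :=
  Subgroup.subset_closure ⟨g₀, g₁, rfl⟩

lemma d_fix_mem {g₁ : G₁} (h : g₁ ∈ X.fix) : X.d g₁ ∈ X.zstab := by
  refine Subgroup.mem_inf.mpr ⟨fun x => ?_, Subgroup.mem_center_iff.mpr fun g₀ => ?_⟩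
  · rw [X.cm2, ← Subgroup.mem_center_iff.mp (X.fix_le_center h) x]
    simp
  · have h1 := X.cm1 g₀ g₁
    rw [h g₀] at h1
    exact mul_inv_eq_iff_eq_mul.mp h1.symm

lemma d_disp_mem {x : G₁} (h : x ∈ X.disp) : X.d x ∈ commutator G₀ := by
  induction h using Subgroup.closure_induction with
  | mem y hy =>
      obtain ⟨g₀, g₁, rfl⟩ := hy
      have h2 : X.d (X.act g₀ g₁ * g₁⁻¹) = ⁅g₀, X.d g₁⁆ := by
        rw [map_mul, map_inv, X.cm1, commutatorElement_def]
      rw [h2]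
      exact mem_commutator_of g₀ (X.d g₁)
  | one => simpa using (commutator G₀).one_mem
  | mul a b _ _ ha hb => rw [map_mul]; exact mul_mem ha hb
  | inv a _ ha => rw [map_inv]; exact inv_mem ha

/-- The boundary map induced on central quotients. -/
def dbar : G₁ ⧸ X.fix →* G₀ ⧸ X.zstab :=
  QuotientGroup.map X.fix X.zstab X.d (fun _ h => X.d_fix_mem h)

/-- The boundary map restricted to the displacement/commutator subgroups. -/
def dres : X.disp →* commutator G₀ :=
  (X.d.domRestrict X.disp).codRestrict (commutator G₀) fun x => X.d_disp_mem x.2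

variable {H₁ H₀ : Type*} [Group H₁] [Group H₀]

/-- Isoclinism of crossed modules. -/
def Isoclinic (X : XMod G₁ G₀) (Y : XMod H₁ H₀) : Prop :=
  ∃ (η₁ : (G₁ ⧸ X.fix) ≃* (H₁ ⧸ Y.fix))
    (η₀ : (G₀ ⧸ X.zstab) ≃* (H₀ ⧸ Y.zstab))
    (ξ₁ : X.disp ≃* Y.disp)
    (ξ₀ : commutator G₀ ≃* commutator H₀),
    (∀ q : G₁ ⧸ X.fix, Y.dbar (η₁ q) = η₀ (X.dbar q)) ∧
    (∀ x : X.disp, Y.dres (ξ₁ x) = ξ₀ (X.dres x)) ∧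
    (∀ (g₁ : G₁) (g₀ : G₀) (h₁ : H₁) (h₀ : H₀),
       η₁ (QuotientGroup.mk g₁) = QuotientGroup.mk h₁ →
       η₀ (QuotientGroup.mk g₀) = QuotientGroup.mk h₀ →
       (ξ₁ ⟨X.act g₀ g₁ * g₁⁻¹, X.disp_gen_mem g₀ g₁⟩ : H₁) = Y.act h₀ h₁ * h₁⁻¹) ∧
    (∀ (g₀ g₀' : G₀) (h₀ h₀' : H₀),
       η₀ (QuotientGroup.mk g₀) = QuotientGroup.mk h₀ →
       η₀ (QuotientGroup.mk g₀') = QuotientGroup.mk h₀' →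
       (ξ₀ ⟨⁅g₀, g₀'⁆, mem_commutator_of g₀ g₀'⟩ : H₀) = ⁅h₀, h₀'⁆)

end XMod

/-- Isoclinism of groups. -/
def IsoclinicGrp (M N : Type*) [Group M] [Group N] : Prop :=
  ∃ (η : (M ⧸ Subgroup.center M) ≃* (N ⧸ Subgroup.center N))
    (ξ : commutator M ≃* commutator N),
    ∀ (x y : M) (u v : N),
      η (QuotientGroup.mk x) = QuotientGroup.mk u →
      η (QuotientGroup.mk y) = QuotientGroup.mk v →
      (ξ ⟨⁅x, y⁆, mem_commutator_of x y⟩ : N) = ⁅u, v⁆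


/-- if the boundary map of a crossed module is surjective (the crossed
module is simply connected), then the displacement subgroup `D_{G₀}(G₁)` equals the
commutator subgroup `[G₁, G₁]`. -/
theorem disp_eq_commutator_of_surjective {G₁ G₀ : Type*} [Group G₁] [Group G₀]
    (X : XMod G₁ G₀) (hd : Function.Surjective X.d) :
    X.disp = commutator G₁ := by
  apply le_antisymm
  · rw [XMod.disp, Subgroup.closure_le]
    rintro _ ⟨g₀, g₁, rfl⟩
    obtain ⟨g, rfl⟩ := hd g₀
    rw [X.cm2]
    have : g * g₁ * g⁻¹ * g₁⁻¹ = ⁅g, g₁⁆ := rfl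
    rw [this]
    exact mem_commutator_of g g₁
  · rw [commutator_def, Subgroup.commutator_def, Subgroup.closure_le]
    rintro _ ⟨x, -, y, -, rfl⟩
    have : ⁅x, y⁆ = X.act (X.d x) y * y⁻¹ := by
      rw [X.cm2]; group
    rw [this]
    exact X.disp_gen_mem _ _
end

section
/- Isoclinism of crossed modules is an equivalence relation: every crossed module is isoclinic to itself; if a crossed module G is isoclinic to a crossed module H, then H is isoclinic to G; and if G is isoclinic to H and H is isoclinic to K, then G is isoclinic to K. -/
open scoped commutatorElement

universe u v w

lemma comm_central_welldef {G : Type*} [Group G] (x y u v : G)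
    (hx : x⁻¹ * u ∈ Subgroup.center G) (hy : y⁻¹ * v ∈ Subgroup.center G) :
    ⁅x, y⁆ = ⁅u, v⁆ := by
  obtain ⟨z, hz, rfl⟩ : ∃ z ∈ Subgroup.center G, u = x * z :=
    ⟨x⁻¹ * u, hx, by group⟩
  obtain ⟨w, hw, rfl⟩ : ∃ w ∈ Subgroup.center G, v = y * w :=
    ⟨y⁻¹ * v, hy, by group⟩
  have hz' := Subgroup.mem_center_iff.mp hz
  have hw' := Subgroup.mem_center_iff.mp hw
  simp only [commutatorElement_def, mul_inv_rev]
  symm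
  calc x * z * (y * w) * (z⁻¹ * x⁻¹) * (w⁻¹ * y⁻¹)
      = x * (z * y) * w * z⁻¹ * x⁻¹ * w⁻¹ * y⁻¹ := by group
    _ = x * (y * z) * w * z⁻¹ * x⁻¹ * w⁻¹ * y⁻¹ := by rw [hz']
    _ = x * y * (z * w) * z⁻¹ * x⁻¹ * w⁻¹ * y⁻¹ := by group
    _ = x * y * (w * z) * z⁻¹ * x⁻¹ * w⁻¹ * y⁻¹ := by rw [← hz']
    _ = x * y * (w * x⁻¹) * w⁻¹ * y⁻¹ := by group
    _ = x * y * (x⁻¹ * w) * w⁻¹ * y⁻¹ := by rw [hw']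
    _ = x * y * x⁻¹ * y⁻¹ := by group

lemma act_welldef {G₁ G₀ : Type*} [Group G₁] [Group G₀] (X : XMod G₁ G₀)
    (g₁ h₁ : G₁) (g₀ h₀ : G₀) (h1 : g₁⁻¹ * h₁ ∈ X.fix) (h0 : g₀⁻¹ * h₀ ∈ X.zstab) :
    X.act g₀ g₁ * g₁⁻¹ = X.act h₀ h₁ * h₁⁻¹ := by
  obtain ⟨z, hz, rfl⟩ : ∃ z ∈ X.fix, h₁ = g₁ * z := ⟨g₁⁻¹ * h₁, h1, by group⟩
  obtain ⟨w, hw, rfl⟩ : ∃ w ∈ X.zstab, h₀ = g₀ * w := ⟨g₀⁻¹ * h₀, h0, by group⟩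
  have hw' : w ∈ X.stab := (Subgroup.mem_inf.mp hw).1
  rw [← X.act_act, X.mem_stab.mp hw', map_mul, X.mem_fix.mp hz]
  group

/-- isoclinism of crossed modules is an equivalence relation. -/
theorem isoclinic_equivalence :
    (∀ (G₁ G₀ : Type u) [Group G₁] [Group G₀] (X : XMod G₁ G₀), X.Isoclinic X) ∧
    (∀ (G₁ G₀ : Type u) [Group G₁] [Group G₀] (H₁ H₀ : Type v) [Group H₁] [Group H₀]
      (X : XMod G₁ G₀) (Y : XMod H₁ H₀), X.Isoclinic Y → Y.Isoclinic X) ∧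
    (∀ (G₁ G₀ : Type u) [Group G₁] [Group G₀] (H₁ H₀ : Type v) [Group H₁] [Group H₀]
      (K₁ K₀ : Type w) [Group K₁] [Group K₀]
      (X : XMod G₁ G₀) (Y : XMod H₁ H₀) (Z : XMod K₁ K₀),
      X.Isoclinic Y → Y.Isoclinic Z → X.Isoclinic Z) := by
  refine ⟨?_, ?_, ?_⟩
  · intro G₁ G₀ _ _ X
    refine ⟨MulEquiv.refl _, MulEquiv.refl _, MulEquiv.refl _, MulEquiv.refl _,
      fun q => rfl, fun x => rfl, ?_, ?_⟩
    · intro g₁ g₀ h₁ h₀ h1 h0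
      simp only [MulEquiv.refl_apply] at h1 h0 ⊢
      exact act_welldef X g₁ h₁ g₀ h₀ (QuotientGroup.eq.mp h1) (QuotientGroup.eq.mp h0)
    · intro g₀ g₀' h₀ h₀' h0 h0'
      simp only [MulEquiv.refl_apply] at h0 h0' ⊢
      exact comm_central_welldef g₀ g₀' h₀ h₀'
        ((Subgroup.mem_inf.mp (QuotientGroup.eq.mp h0)).2)
        ((Subgroup.mem_inf.mp (QuotientGroup.eq.mp h0')).2)
  · rintro G₁ G₀ _ _ H₁ H₀ _ _ X Y ⟨η₁, η₀, ξ₁, ξ₀, hd1, hd2, hact, hcomm⟩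
    refine ⟨η₁.symm, η₀.symm, ξ₁.symm, ξ₀.symm, ?_, ?_, ?_, ?_⟩
    · intro q
      have := hd1 (η₁.symm q)
      rw [η₁.apply_symm_apply] at this
      rw [this, η₀.symm_apply_apply]
    · intro x
      have := hd2 (ξ₁.symm x)
      rw [ξ₁.apply_symm_apply] at this
      rw [this, ξ₀.symm_apply_apply]
    · intro h₁ h₀ g₁ g₀ h1 h0
      have e1 : η₁ (QuotientGroup.mk g₁) = QuotientGroup.mk h₁ := by
        rw [← h1, η₁.apply_symm_apply]
      have e0 : η₀ (QuotientGroup.mk g₀) = QuotientGroup.mk h₀ := by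
        rw [← h0, η₀.apply_symm_apply]
      have := hact g₁ g₀ h₁ h₀ e1 e0
      have e2 : ξ₁ ⟨X.act g₀ g₁ * g₁⁻¹, X.disp_gen_mem g₀ g₁⟩
          = ⟨Y.act h₀ h₁ * h₁⁻¹, Y.disp_gen_mem h₀ h₁⟩ := Subtype.ext this
      rw [← e2, ξ₁.symm_apply_apply]
    · intro h₀ h₀' g₀ g₀' h0 h0'
      have e0 : η₀ (QuotientGroup.mk g₀) = QuotientGroup.mk h₀ := by
        rw [← h0, η₀.apply_symm_apply]
      have e0' : η₀ (QuotientGroup.mk g₀') = QuotientGroup.mk h₀' := by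
        rw [← h0', η₀.apply_symm_apply]
      have e2 : ξ₀ ⟨⁅g₀, g₀'⁆, mem_commutator_of g₀ g₀'⟩
          = ⟨⁅h₀, h₀'⁆, mem_commutator_of h₀ h₀'⟩ :=
        Subtype.ext (hcomm g₀ g₀' h₀ h₀' e0 e0')
      rw [← e2, ξ₀.symm_apply_apply]
  · rintro G₁ G₀ _ _ H₁ H₀ _ _ K₁ K₀ _ _ X Y Z
      ⟨η₁, η₀, ξ₁, ξ₀, hd1, hd2, hact, hcomm⟩
      ⟨η₁', η₀', ξ₁', ξ₀', hd1', hd2', hact', hcomm'⟩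
    refine ⟨η₁.trans η₁', η₀.trans η₀', ξ₁.trans ξ₁', ξ₀.trans ξ₀', ?_, ?_, ?_, ?_⟩
    · intro q; simp [MulEquiv.trans_apply, hd1', hd1]
    · intro x; simp [MulEquiv.trans_apply, hd2', hd2]
    · intro g₁ g₀ k₁ k₀ h1 h0
      obtain ⟨h₁, e1⟩ := QuotientGroup.mk_surjective (η₁ (QuotientGroup.mk g₁))
      obtain ⟨h₀, e0⟩ := QuotientGroup.mk_surjective (η₀ (QuotientGroup.mk g₀))
      have f1 : η₁' (QuotientGroup.mk h₁) = QuotientGroup.mk k₁ := by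
        rw [e1]; exact h1
      have f0 : η₀' (QuotientGroup.mk h₀) = QuotientGroup.mk k₀ := by
        rw [e0]; exact h0
      have step1 : ξ₁ ⟨X.act g₀ g₁ * g₁⁻¹, X.disp_gen_mem g₀ g₁⟩
          = ⟨Y.act h₀ h₁ * h₁⁻¹, Y.disp_gen_mem h₀ h₁⟩ :=
        Subtype.ext (hact g₁ g₀ h₁ h₀ e1.symm e0.symm)
      rw [MulEquiv.trans_apply, step1]
      exact hact' h₁ h₀ k₁ k₀ f1 f0
    · intro g₀ g₀' k₀ k₀' h0 h0'
      obtain ⟨h₀, e0⟩ := QuotientGroup.mk_surjective (η₀ (QuotientGroup.mk g₀))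
      obtain ⟨h₀', e0'⟩ := QuotientGroup.mk_surjective (η₀ (QuotientGroup.mk g₀'))
      have f0 : η₀' (QuotientGroup.mk h₀) = QuotientGroup.mk k₀ := by
        rw [e0]; exact h0
      have f0' : η₀' (QuotientGroup.mk h₀') = QuotientGroup.mk k₀' := by
        rw [e0']; exact h0'
      have step1 : ξ₀ ⟨⁅g₀, g₀'⁆, mem_commutator_of g₀ g₀'⟩
          = ⟨⁅h₀, h₀'⁆, mem_commutator_of h₀ h₀'⟩ :=
        Subtype.ext (hcomm g₀ g₀' h₀ h₀' e0.symm e0'.symm)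
      rw [MulEquiv.trans_apply, step1]
      exact hcomm' h₀ h₀' k₀ k₀' f0 f0'
end

section
/- For every natural number n ≥ 3, the dihedral group of order 2ⁿ (the dihedral group on 2^{n-1} vertices) and the generalized quaternion group of order 2ⁿ (the dicyclic/quaternion group of parameter 2^{n-2}) are isoclinic groups. -/
open scoped commutatorElement

namespace IsoclinicAux

open DihedralGroup QuaternionGroup

variable {k : ℕ}

lemma r_inv (i : ZMod (2*k)) : (DihedralGroup.r i)⁻¹ = DihedralGroup.r (-i) := rfl
lemma sr_inv (i : ZMod (2*k)) : (DihedralGroup.sr i)⁻¹ = DihedralGroup.sr i := rfl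
lemma a_inv (i : ZMod (2*k)) : (QuaternionGroup.a i : QuaternionGroup k)⁻¹ = QuaternionGroup.a (-i) := rfl
lemma xa_inv (i : ZMod (2*k)) : (QuaternionGroup.xa i : QuaternionGroup k)⁻¹ = QuaternionGroup.xa ((k : ZMod (2*k)) + i) := rfl

lemma two_k_zero : ((2 : ZMod (2*k)) * (k : ℕ)) = 0 := by
  have := ZMod.natCast_self (2*k)
  push_cast at this ⊢
  linear_combination this

/-- forward map -/
def F : DihedralGroup (2*k) → QuaternionGroup k
  | .r i => .a i
  | .sr i => .xa i

/-- backward map -/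
def Finv : QuaternionGroup k → DihedralGroup (2*k)
  | .a i => .r i
  | .xa i => .sr i

lemma a_mem_center {i : ZMod (2*k)} (h : 2 * i = 0) :
    (QuaternionGroup.a i : QuaternionGroup k) ∈ Subgroup.center (QuaternionGroup k) := by
  rw [Subgroup.mem_center_iff]
  rintro (j | j)
  · simp [add_comm]
  · simp only [xa_mul_a, a_mul_xa]
    congr 1
    linear_combination h

lemma a_k_mem_center :
    (QuaternionGroup.a (k : ZMod (2*k)) : QuaternionGroup k) ∈ Subgroup.center (QuaternionGroup k) :=
  a_mem_center two_k_zero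

lemma r_mem_center {i : ZMod (2*k)} (h : 2 * i = 0) :
    (DihedralGroup.r i : DihedralGroup (2*k)) ∈ Subgroup.center (DihedralGroup (2*k)) := by
  rw [Subgroup.mem_center_iff]
  rintro (j | j)
  · simp [add_comm]
  · simp only [sr_mul_r, r_mul_sr]
    congr 1
    linear_combination h

lemma two_ne_zero' (hk : 2 ≤ k) : (2 : ZMod (2*k)) ≠ 0 := by
  have : ((2:ℕ) : ZMod (2*k)) ≠ 0 := by
    rw [Ne, ZMod.natCast_eq_zero_iff]
    intro h
    have := Nat.le_of_dvd (by norm_num) h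
    omega
  simpa using this

/-! ### Commutator computations -/

lemma comm_rr (i j : ZMod (2*k)) : ⁅DihedralGroup.r i, DihedralGroup.r j⁆ = (1 : DihedralGroup (2*k)) := by
  simp only [commutatorElement_def, r_inv, r_mul_r, DihedralGroup.one_def]
  congr 1; ring

lemma comm_rsr (i j : ZMod (2*k)) :
    ⁅DihedralGroup.r i, DihedralGroup.sr j⁆ = DihedralGroup.r (2*i) := by
  simp only [commutatorElement_def, r_inv, sr_inv, r_mul_r, r_mul_sr, sr_mul_r, sr_mul_sr]
  congr 1; ring

lemma comm_srr (i j : ZMod (2*k)) :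
    ⁅DihedralGroup.sr i, DihedralGroup.r j⁆ = DihedralGroup.r (2*(-j)) := by
  simp only [commutatorElement_def, r_inv, sr_inv, r_mul_r, r_mul_sr, sr_mul_r, sr_mul_sr]
  congr 1; ring

lemma comm_srsr (i j : ZMod (2*k)) :
    ⁅DihedralGroup.sr i, DihedralGroup.sr j⁆ = DihedralGroup.r (2*(j-i)) := by
  simp only [commutatorElement_def, sr_inv, sr_mul_sr, r_mul_sr, r_mul_r]
  congr 1; ring

lemma comm_aa (i j : ZMod (2*k)) :
    ⁅QuaternionGroup.a i, QuaternionGroup.a j⁆ = (1 : QuaternionGroup k) := by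
  simp only [commutatorElement_def, a_inv, a_mul_a, QuaternionGroup.one_def]
  congr 1; ring

lemma comm_axa (i j : ZMod (2*k)) :
    ⁅QuaternionGroup.a i, QuaternionGroup.xa j⁆ = (QuaternionGroup.a (2*i) : QuaternionGroup k) := by
  simp only [commutatorElement_def, a_inv, xa_inv, a_mul_a, a_mul_xa, xa_mul_a, xa_mul_xa]
  congr 1; linear_combination two_k_zero (k := k)

lemma comm_xaa (i j : ZMod (2*k)) :
    ⁅QuaternionGroup.xa i, QuaternionGroup.a j⁆ = (QuaternionGroup.a (2*(-j)) : QuaternionGroup k) := by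
  simp only [commutatorElement_def, a_inv, xa_inv, a_mul_a, a_mul_xa, xa_mul_a, xa_mul_xa]
  congr 1; linear_combination two_k_zero (k := k)

lemma comm_xaxa (i j : ZMod (2*k)) :
    ⁅QuaternionGroup.xa i, QuaternionGroup.xa j⁆ = (QuaternionGroup.a (2*(j-i)) : QuaternionGroup k) := by
  simp only [commutatorElement_def, xa_inv, xa_mul_xa, a_mul_xa, a_mul_a]
  congr 1; linear_combination two_k_zero (k := k)

/-- The key compatibility: `F` sends commutators to commutators. -/
lemma F_comm (x y : DihedralGroup (2*k)) : F ⁅x, y⁆ = ⁅F x, F y⁆ := by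
  rcases x with i | i <;> rcases y with j | j
  · rw [comm_rr]
    show F (DihedralGroup.r 0) = ⁅QuaternionGroup.a i, QuaternionGroup.a j⁆
    rw [comm_aa]; rfl
  · rw [comm_rsr]
    show F (DihedralGroup.r (2*i)) = ⁅QuaternionGroup.a i, QuaternionGroup.xa j⁆
    rw [comm_axa]; rfl
  · rw [comm_srr]
    show F (DihedralGroup.r (2*(-j))) = ⁅QuaternionGroup.xa i, QuaternionGroup.a j⁆
    rw [comm_xaa]; rfl
  · rw [comm_srsr]
    show F (DihedralGroup.r (2*(j-i))) = ⁅QuaternionGroup.xa i, QuaternionGroup.xa j⁆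
    rw [comm_xaxa]; rfl

/-! ### Commutator subgroups -/

lemma r_two_mem (i : ZMod (2*k)) :
    (DihedralGroup.r (2*i) : DihedralGroup (2*k)) ∈ commutator (DihedralGroup (2*k)) := by
  have h := mem_commutator_of (DihedralGroup.sr 0) (DihedralGroup.sr i)
  rwa [comm_srsr, sub_zero] at h

lemma a_two_mem (i : ZMod (2*k)) :
    (QuaternionGroup.a (2*i) : QuaternionGroup k) ∈ commutator (QuaternionGroup k) := by
  have h := mem_commutator_of (QuaternionGroup.xa 0) (QuaternionGroup.xa i)
  rwa [comm_xaxa, sub_zero] at h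

lemma mem_comm_D {g : DihedralGroup (2*k)} (h : g ∈ commutator (DihedralGroup (2*k))) :
    ∃ i, g = DihedralGroup.r (2*i) := by
  rw [commutator_eq_closure] at h
  induction h using Subgroup.closure_induction with
  | mem g hg =>
      obtain ⟨x, y, rfl⟩ := hg
      rcases x with i | i <;> rcases y with j | j
      · exact ⟨0, by rw [comm_rr]; simp [DihedralGroup.one_def, -DihedralGroup.r_zero]⟩
      · exact ⟨i, by rw [comm_rsr]⟩
      · exact ⟨-j, by rw [comm_srr]⟩
      · exact ⟨j - i, by rw [comm_srsr]⟩
  | one => exact ⟨0, by simp [DihedralGroup.one_def, -DihedralGroup.r_zero]⟩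
  | mul g h _ _ hg hh =>
      obtain ⟨i, rfl⟩ := hg; obtain ⟨j, rfl⟩ := hh
      exact ⟨i + j, by rw [r_mul_r]; ring_nf⟩
  | inv g _ hg =>
      obtain ⟨i, rfl⟩ := hg
      exact ⟨-i, by rw [r_inv]; ring_nf⟩

lemma mem_comm_Q {g : QuaternionGroup k} (h : g ∈ commutator (QuaternionGroup k)) :
    ∃ i, g = QuaternionGroup.a (2*i) := by
  rw [commutator_eq_closure] at h
  induction h using Subgroup.closure_induction with
  | mem g hg =>
      obtain ⟨x, y, rfl⟩ := hg
      rcases x with i | i <;> rcases y with j | j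
      · exact ⟨0, by rw [comm_aa]; simp [QuaternionGroup.one_def, -QuaternionGroup.a_zero]⟩
      · exact ⟨i, by rw [comm_axa]⟩
      · exact ⟨-j, by rw [comm_xaa]⟩
      · exact ⟨j - i, by rw [comm_xaxa]⟩
  | one => exact ⟨0, by simp [QuaternionGroup.one_def, -QuaternionGroup.a_zero]⟩
  | mul g h _ _ hg hh =>
      obtain ⟨i, rfl⟩ := hg; obtain ⟨j, rfl⟩ := hh
      exact ⟨i + j, by rw [a_mul_a]; ring_nf⟩
  | inv g _ hg =>
      obtain ⟨i, rfl⟩ := hg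
      exact ⟨-i, by rw [a_inv]; ring_nf⟩

end IsoclinicAux

namespace IsoclinicAux

open DihedralGroup QuaternionGroup

variable {k : ℕ}

/-! ### Central elements and commutators -/

lemma conj_central {G : Type*} [Group G] {z : G} (hz : z ∈ Subgroup.center G) (h : G) :
    z * h * z⁻¹ = h := by
  rw [← Subgroup.mem_center_iff.mp hz h]
  exact mul_inv_cancel_right h z

lemma commutator_mul_central {G : Type*} [Group G] (g h z w : G)
    (hz : z ∈ Subgroup.center G) (hw : w ∈ Subgroup.center G) :
    ⁅g * z, h * w⁆ = ⁅g, h⁆ := by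
  have h1 : ⁅g * z, h * w⁆ = ⁅g, h * w⁆ := by
    simp only [commutatorElement_def]
    calc g * z * (h * w) * (g * z)⁻¹ * (h * w)⁻¹
        = g * (z * (h * w) * z⁻¹) * g⁻¹ * (h * w)⁻¹ := by group
      _ = g * (h * w) * g⁻¹ * (h * w)⁻¹ := by rw [conj_central hz]
  have h2 : ⁅g, h * w⁆ = ⁅g, h⁆ := by
    simp only [commutatorElement_def]
    calc g * (h * w) * g⁻¹ * (h * w)⁻¹
        = g * h * (w * g⁻¹ * w⁻¹) * h⁻¹ := by group
      _ = g * h * g⁻¹ * h⁻¹ := by rw [conj_central hw]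
  rw [h1, h2]

/-! ### The homomorphism to the central quotient -/

lemma F_mul (x y : DihedralGroup (2*k)) :
    (QuotientGroup.mk (F (x * y)) : QuaternionGroup k ⧸ Subgroup.center (QuaternionGroup k)) =
      QuotientGroup.mk (F x * F y) := by
  rcases x with i | i <;> rcases y with j | j
  · show (QuotientGroup.mk (QuaternionGroup.a (i+j)) : _) =
      QuotientGroup.mk (QuaternionGroup.a i * QuaternionGroup.a j)
    rw [a_mul_a]
  · show (QuotientGroup.mk (QuaternionGroup.xa (j-i)) : _) =
      QuotientGroup.mk (QuaternionGroup.a i * QuaternionGroup.xa j)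
    rw [a_mul_xa]
  · show (QuotientGroup.mk (QuaternionGroup.xa (i+j)) : _) =
      QuotientGroup.mk (QuaternionGroup.xa i * QuaternionGroup.a j)
    rw [xa_mul_a]
  · show (QuotientGroup.mk (QuaternionGroup.a (j-i)) : _) =
      QuotientGroup.mk (QuaternionGroup.xa i * QuaternionGroup.xa j)
    rw [xa_mul_xa, QuotientGroup.eq]
    show (QuaternionGroup.a (j-i))⁻¹ * QuaternionGroup.a ((k : ZMod (2*k)) + j - i) ∈ _
    rw [a_inv, a_mul_a]
    exact a_mem_center (by linear_combination two_k_zero (k := k))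

/-- The homomorphism `DihedralGroup (2k) →* QuaternionGroup k ⧸ center`. -/
def phi (k : ℕ) :
    DihedralGroup (2*k) →* QuaternionGroup k ⧸ Subgroup.center (QuaternionGroup k) :=
  MonoidHom.mk' (fun g => QuotientGroup.mk (F g)) (fun x y => by
    show (QuotientGroup.mk (F (x * y)) : _) = QuotientGroup.mk (F x) * QuotientGroup.mk (F y)
    rw [F_mul, QuotientGroup.mk_mul])

lemma phi_apply (g : DihedralGroup (2*k)) : phi k g = QuotientGroup.mk (F g) := rfl

lemma ker_phi_le (hk : 2 ≤ k) (g : DihedralGroup (2*k)) (h : phi k g = 1) :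
    g ∈ Subgroup.center (DihedralGroup (2*k)) := by
  rcases g with i | i
  · have h' : (QuotientGroup.mk (QuaternionGroup.a i) :
        QuaternionGroup k ⧸ Subgroup.center (QuaternionGroup k)) = 1 := h
    rw [QuotientGroup.eq_one_iff] at h'
    have h2 := Subgroup.mem_center_iff.mp h' (QuaternionGroup.xa 0)
    rw [xa_mul_a, a_mul_xa, QuaternionGroup.xa.injEq] at h2
    exact r_mem_center (by linear_combination h2)
  · have h' : (QuotientGroup.mk (QuaternionGroup.xa i) :
        QuaternionGroup k ⧸ Subgroup.center (QuaternionGroup k)) = 1 := h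
    rw [QuotientGroup.eq_one_iff] at h'
    have h2 := Subgroup.mem_center_iff.mp h' (QuaternionGroup.a 1)
    rw [a_mul_xa, xa_mul_a, QuaternionGroup.xa.injEq] at h2
    exact absurd (by linear_combination -h2) (two_ne_zero' hk)

lemma center_le_ker (hk : 2 ≤ k) :
    Subgroup.center (DihedralGroup (2*k)) ≤ (phi k).ker := by
  intro g hg
  rcases g with i | i
  · rw [MonoidHom.mem_ker]
    show (QuotientGroup.mk (QuaternionGroup.a i) : _) = 1
    rw [QuotientGroup.eq_one_iff]
    have h2 := Subgroup.mem_center_iff.mp hg (DihedralGroup.sr 0)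
    rw [sr_mul_r, r_mul_sr, DihedralGroup.sr.injEq] at h2
    exact a_mem_center (by linear_combination h2)
  · have h2 := Subgroup.mem_center_iff.mp hg (DihedralGroup.r 1)
    rw [r_mul_sr, sr_mul_r, DihedralGroup.sr.injEq] at h2
    exact absurd (by linear_combination -h2) (two_ne_zero' hk)

/-- The isomorphism of central quotients. -/
noncomputable def eta (hk : 2 ≤ k) :
    (DihedralGroup (2*k) ⧸ Subgroup.center (DihedralGroup (2*k))) ≃*
      (QuaternionGroup k ⧸ Subgroup.center (QuaternionGroup k)) :=
  MulEquiv.ofBijective (QuotientGroup.lift _ (phi k) (center_le_ker hk))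
    (by
      constructor
      · rw [injective_iff_map_eq_one]
        intro q
        induction q using QuotientGroup.induction_on with
        | H g =>
          intro h
          rw [QuotientGroup.lift_mk] at h
          rw [QuotientGroup.eq_one_iff]
          exact ker_phi_le hk g h
      · intro q
        induction q using QuotientGroup.induction_on with
        | H g =>
          rcases g with i | i
          · exact ⟨QuotientGroup.mk (DihedralGroup.r i), rfl⟩
          · exact ⟨QuotientGroup.mk (DihedralGroup.sr i), rfl⟩)

lemma eta_mk (hk : 2 ≤ k) (g : DihedralGroup (2*k)) :
    eta hk (QuotientGroup.mk g) = QuotientGroup.mk (F g) := rfl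

/-- The isomorphism of commutator subgroups. -/
def xi (k : ℕ) : commutator (DihedralGroup (2*k)) ≃* commutator (QuaternionGroup k) where
  toFun g := ⟨F g.1, by
    obtain ⟨i, hi⟩ := mem_comm_D g.2
    rw [hi]
    exact a_two_mem i⟩
  invFun q := ⟨Finv q.1, by
    obtain ⟨i, hi⟩ := mem_comm_Q q.2
    rw [hi]
    exact r_two_mem i⟩
  left_inv g := Subtype.ext (by rcases g with ⟨i | i, hg⟩ <;> rfl)
  right_inv q := Subtype.ext (by rcases q with ⟨i | i, hq⟩ <;> rfl)
  map_mul' g h := Subtype.ext (by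
    obtain ⟨i, hi⟩ := mem_comm_D g.2
    obtain ⟨j, hj⟩ := mem_comm_D h.2
    show F ((g : DihedralGroup (2*k)) * (h : DihedralGroup (2*k))) = F g.1 * F h.1
    rw [hi, hj, r_mul_r]
    show QuaternionGroup.a (2*i + 2*j) = QuaternionGroup.a (2*i) * QuaternionGroup.a (2*j)
    rw [a_mul_a])

lemma main (k : ℕ) (hk : 2 ≤ k) :
    IsoclinicGrp (DihedralGroup (2*k)) (QuaternionGroup k) := by
  refine ⟨eta hk, xi k, ?_⟩
  intro x y u v hx hy
  rw [eta_mk] at hx hy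
  have hu : (F x)⁻¹ * u ∈ Subgroup.center (QuaternionGroup k) := QuotientGroup.eq.mp hx
  have hv : (F y)⁻¹ * v ∈ Subgroup.center (QuaternionGroup k) := QuotientGroup.eq.mp hy
  have h1 : (xi k ⟨⁅x, y⁆, mem_commutator_of x y⟩ : QuaternionGroup k) = F ⁅x, y⁆ := rfl
  rw [h1, F_comm,
    show u = F x * ((F x)⁻¹ * u) from (mul_inv_cancel_left _ _).symm,
    show v = F y * ((F y)⁻¹ * v) from (mul_inv_cancel_left _ _).symm,
    commutator_mul_central _ _ _ _ hu hv]

end IsoclinicAux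

/-- for `n ≥ 3`, the dihedral group of order `2ⁿ` and the generalized
quaternion group of order `2ⁿ` are isoclinic. -/
theorem dihedralGroup_isoclinic_quaternionGroup (n : ℕ) (hn : 3 ≤ n) :
    IsoclinicGrp (DihedralGroup (2 ^ (n - 1))) (QuaternionGroup (2 ^ (n - 2))) := by
  have h : 2 ^ (n - 1) = 2 * 2 ^ (n - 2) := by
    rw [show n - 1 = (n - 2) + 1 by omega, pow_succ]
    ring
  rw [h]
  refine IsoclinicAux.main _ ?_
  calc 2 = 2 ^ 1 := rfl
    _ ≤ 2 ^ (n - 2) := Nat.pow_le_pow_right (by norm_num) (by omega)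
end

section
/- Let M be a group and H a subgroup of M such that H·Z(M) = M, i.e. every element of M is a product of an element of H and an element of the center Z(M). Then H (with its group structure) is isoclinic to M. -/
open scoped commutatorElement

lemma comm_center_right {M : Type*} [Group M] (x y w : M)
    (hw : w ∈ Subgroup.center M) : ⁅x, y * w⁆ = ⁅x, y⁆ := by
  have hw' := Subgroup.mem_center_iff.mp hw
  simp only [commutatorElement_def, mul_inv_rev]
  calc x * (y * w) * x⁻¹ * (w⁻¹ * y⁻¹)
      = x * y * (w * x⁻¹) * w⁻¹ * y⁻¹ := by group
    _ = x * y * (x⁻¹ * w) * w⁻¹ * y⁻¹ := by rw [hw' x⁻¹]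
    _ = x * y * x⁻¹ * y⁻¹ := by group

lemma comm_center_left {M : Type*} [Group M] (x y z : M)
    (hz : z ∈ Subgroup.center M) : ⁅x * z, y⁆ = ⁅x, y⁆ := by
  have hz' := Subgroup.mem_center_iff.mp hz
  simp only [commutatorElement_def, mul_inv_rev]
  calc x * z * y * (z⁻¹ * x⁻¹) * y⁻¹
      = x * (y * z) * z⁻¹ * x⁻¹ * y⁻¹ := by rw [hz' y]; group
    _ = x * y * x⁻¹ * y⁻¹ := by group

lemma commutator_mul_center {M : Type*} [Group M] (x y z w : M)
    (hz : z ∈ Subgroup.center M) (hw : w ∈ Subgroup.center M) :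
    ⁅x * z, y * w⁆ = ⁅x, y⁆ := by
  rw [comm_center_right _ _ _ hw, comm_center_left _ _ _ hz]

lemma center_le_comap {M : Type*} [Group M] (H : Subgroup M)
    (h : ∀ m : M, ∃ x ∈ H, ∃ z ∈ Subgroup.center M, m = x * z) :
    Subgroup.center H ≤ (Subgroup.center M).comap H.subtype := by
  intro a ha
  have ha' := Subgroup.mem_center_iff.mp ha
  simp only [Subgroup.mem_comap, Subgroup.coe_subtype]
  rw [Subgroup.mem_center_iff]
  intro m
  obtain ⟨x, hx, z, hz, rfl⟩ := h m
  have hcomm : x * (a : M) = (a : M) * x := by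
    have := congrArg (Subtype.val) (ha' ⟨x, hx⟩)
    simpa using this
  have hz' := Subgroup.mem_center_iff.mp hz
  calc x * z * a = x * (↑a * z) := by rw [mul_assoc, ← hz' (a:M)]
    _ = ↑a * x * z := by rw [← mul_assoc, hcomm]
    _ = ↑a * (x * z) := by rw [mul_assoc]

lemma commutator_H_eq {M : Type*} [Group M] (H : Subgroup M)
    (h : ∀ m : M, ∃ x ∈ H, ∃ z ∈ Subgroup.center M, m = x * z) :
    ⁅H, H⁆ = commutator M := by
  rw [commutator_def]
  apply le_antisymm (Subgroup.commutator_mono le_top le_top)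
  rw [Subgroup.commutator_le]
  intro m _ n _
  obtain ⟨x, hx, z, hz, rfl⟩ := h m
  obtain ⟨y, hy, w, hw, rfl⟩ := h n
  rw [commutator_mul_center _ _ _ _ hz hw]
  exact Subgroup.commutator_mem_commutator hx hy

lemma map_commutator_eq' {M : Type*} [Group M] (H : Subgroup M) :
    (commutator ↥H).map H.subtype = ⁅H, H⁆ := by
  rw [commutator_def, Subgroup.map_commutator, ← MonoidHom.range_eq_map,
    Subgroup.range_subtype]

lemma mem_commutator_M {M : Type*} [Group M] (H : Subgroup M)
    (h : ∀ m : M, ∃ x ∈ H, ∃ z ∈ Subgroup.center M, m = x * z)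
    {a : H} (ha : a ∈ commutator ↥H) : (a : M) ∈ commutator M := by
  rw [← commutator_H_eq H h, ← map_commutator_eq' H]
  exact ⟨a, ha, rfl⟩

theorem isoclinicGrp_main (M : Type*) [Group M] (H : Subgroup M)
    (h : ∀ m : M, ∃ x ∈ H, ∃ z ∈ Subgroup.center M, m = x * z) :
    ∃ (η : (H ⧸ Subgroup.center H) ≃* (M ⧸ Subgroup.center M))
    (ξ : commutator ↥H ≃* commutator M),
    ∀ (x y : H) (u v : M),
      η (QuotientGroup.mk x) = QuotientGroup.mk u →
      η (QuotientGroup.mk y) = QuotientGroup.mk v →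
      (ξ ⟨⁅x, y⁆, mem_commutator_of x y⟩ : M) = ⁅u, v⁆ := by
  -- the quotient map
  set f : (H ⧸ Subgroup.center H) →* (M ⧸ Subgroup.center M) :=
    QuotientGroup.map _ _ H.subtype (center_le_comap H h) with hf
  have hfmk : ∀ a : H, f (QuotientGroup.mk a) = QuotientGroup.mk (a : M) := fun a => rfl
  have hbij : Function.Bijective f := by
    constructor
    · rw [← MonoidHom.ker_eq_bot_iff, eq_bot_iff]
      intro q hq
      induction q using QuotientGroup.induction_on with
      | H a =>
        simp only [MonoidHom.mem_ker, hfmk] at hq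
        rw [QuotientGroup.eq_one_iff] at hq
        rw [Subgroup.mem_bot, QuotientGroup.eq_one_iff, Subgroup.mem_center_iff]
        intro b
        have := Subgroup.mem_center_iff.mp hq (b : M)
        exact Subtype.ext this
    · intro q
      induction q using QuotientGroup.induction_on with
      | H m =>
        obtain ⟨x, hx, z, hz, rfl⟩ := h m
        refine ⟨QuotientGroup.mk ⟨x, hx⟩, ?_⟩
        rw [hfmk]
        exact (QuotientGroup.eq.mpr (by simpa using hz)).symm
  -- the commutator map
  set g : commutator ↥H →* commutator M :=
    (H.subtype.comp (commutator ↥H).subtype).codRestrict _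
      (fun a => mem_commutator_M H h a.2) with hg
  have hgval : ∀ a : commutator ↥H, (g a : M) = ((a : H) : M) := fun a => rfl
  have hgbij : Function.Bijective g := by
    constructor
    · intro a b hab
      have : ((a : H) : M) = ((b : H) : M) := by
        rw [← hgval, ← hgval, hab]
      exact Subtype.ext (Subtype.ext this)
    · rintro ⟨b, hb⟩
      rw [← commutator_H_eq H h, ← map_commutator_eq' H] at hb
      obtain ⟨a, ha, hab⟩ := hb
      exact ⟨⟨a, ha⟩, Subtype.ext hab⟩
  refine ⟨MulEquiv.ofBijective f hbij, MulEquiv.ofBijective g hgbij, ?_⟩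
  intro x y u v hxu hyv
  have hxu' : QuotientGroup.mk ((x : M)) = (QuotientGroup.mk u : M ⧸ Subgroup.center M) := by
    rw [← hfmk x]; exact hxu
  have hyv' : QuotientGroup.mk ((y : M)) = (QuotientGroup.mk v : M ⧸ Subgroup.center M) := by
    rw [← hfmk y]; exact hyv
  have hz : ((x : M))⁻¹ * u ∈ Subgroup.center M := QuotientGroup.eq.mp hxu'
  have hw : ((y : M))⁻¹ * v ∈ Subgroup.center M := QuotientGroup.eq.mp hyv'
  have hu : u = (x : M) * (((x : M))⁻¹ * u) := by group
  have hv : v = (y : M) * (((y : M))⁻¹ * v) := by group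
  have : (MulEquiv.ofBijective g hgbij ⟨⁅x, y⁆, mem_commutator_of x y⟩ : M)
      = ⁅(x : M), (y : M)⁆ := by
    rw [MulEquiv.ofBijective_apply, hgval]
    push_cast
    rfl
  rw [this, hu, hv, commutator_mul_center _ _ _ _ hz hw]


/-- if `H` is a subgroup of `M` with `H · Z(M) = M`, then `H` is
isoclinic to `M`. -/
theorem isoclinicGrp_of_mul_center_eq (M : Type*) [Group M] (H : Subgroup M)
    (h : ∀ m : M, ∃ x ∈ H, ∃ z ∈ Subgroup.center M, m = x * z) :
    IsoclinicGrp H M := isoclinicGrp_main M H h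
end

section
/- Let H : H₁ → H₀ be a subcrossed module of a crossed module G : G₁ → G₀ such that G₁ = H₁·G₁^{G₀} and G₀ = H₀·(St_{G₀}(G₁) ∩ Z(G₀)). Then St_{H₀}(H₁) ∩ Z(H₀) = H₀ ∩ (St_{G₀}(G₁) ∩ Z(G₀)), as subsets of G₀. -/
open scoped commutatorElement

namespace XMod

variable {G₁ G₀ : Type*} [Group G₁] [Group G₀] (X : XMod G₁ G₀)

/-- Auxiliary automorphism of `H₁` induced by `h₀ ∈ H₀`. -/
def raux (H₁ : Subgroup G₁) (H₀ : Subgroup G₀)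
    (hact : ∀ h₀ ∈ H₀, ∀ h₁ ∈ H₁, X.act h₀ h₁ ∈ H₁) (h₀ : H₀) : H₁ ≃* H₁ where
  toFun h₁ := ⟨X.act h₀ h₁, hact h₀ h₀.2 h₁ h₁.2⟩
  invFun h₁ := ⟨X.act ((h₀ : G₀))⁻¹ h₁, hact _ (inv_mem h₀.2) h₁ h₁.2⟩
  left_inv h₁ := Subtype.ext (by
    show X.act ((h₀ : G₀))⁻¹ (X.act (h₀ : G₀) h₁) = (h₁ : G₁)
    rw [X.act_act, inv_mul_cancel, X.act_one])
  right_inv h₁ := Subtype.ext (by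
    show X.act (h₀ : G₀) (X.act ((h₀ : G₀))⁻¹ h₁) = (h₁ : G₁)
    rw [X.act_act, mul_inv_cancel, X.act_one])
  map_mul' a b := Subtype.ext (by
    show X.act (h₀ : G₀) ((a : G₁) * b) = X.act (h₀ : G₀) a * X.act (h₀ : G₀) b
    exact map_mul _ _ _)

/-- The subcrossed module of `X` determined by subgroups `H₁ ≤ G₁`, `H₀ ≤ G₀`. -/
def restrict (H₁ : Subgroup G₁) (H₀ : Subgroup G₀)
    (hd : ∀ h ∈ H₁, X.d h ∈ H₀)
    (hact : ∀ h₀ ∈ H₀, ∀ h₁ ∈ H₁, X.act h₀ h₁ ∈ H₁) : XMod H₁ H₀ where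
  d := {
    toFun := fun h => ⟨X.d h, hd h h.2⟩
    map_one' := Subtype.ext (by simp)
    map_mul' := fun a b => Subtype.ext (by simp) }
  act := {
    toFun := X.raux H₁ H₀ hact
    map_one' := MulEquiv.ext fun h₁ => Subtype.ext (by
      show X.act ((1 : H₀) : G₀) h₁ = (h₁ : G₁)
      simp [X.act_one])
    map_mul' := fun a b => MulEquiv.ext fun h₁ => Subtype.ext (by
      show X.act (((a * b : H₀)) : G₀) h₁ = X.act (a : G₀) (X.act (b : G₀) h₁)
      rw [X.act_act]
      norm_cast) }
  cm1 := fun g₀ g₁ => Subtype.ext (by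
    show X.d (X.act (g₀ : G₀) g₁) = (g₀ : G₀) * X.d g₁ * (g₀ : G₀)⁻¹
    exact X.cm1 _ _)
  cm2 := fun g₁ g₁' => Subtype.ext (by
    show X.act (X.d (g₁ : G₁)) g₁' = (g₁ : G₁) * g₁' * (g₁ : G₁)⁻¹
    exact X.cm2 _ _)

end XMod


/-- if `H : H₁ → H₀` is a subcrossed module of `G : G₁ → G₀` with
`G₁ = H₁ · G₁^{G₀}` and `G₀ = H₀ · (St_{G₀}(G₁) ∩ Z(G₀))`, then
`St_{H₀}(H₁) ∩ Z(H₀) = H₀ ∩ (St_{G₀}(G₁) ∩ Z(G₀))` as subsets of `G₀`. -/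
theorem restrict_zstab_eq {G₁ G₀ : Type*} [Group G₁] [Group G₀] (X : XMod G₁ G₀)
    (H₁ : Subgroup G₁) (H₀ : Subgroup G₀)
    (hd : ∀ h ∈ H₁, X.d h ∈ H₀)
    (hact : ∀ h₀ ∈ H₀, ∀ h₁ ∈ H₁, X.act h₀ h₁ ∈ H₁)
    (hG₁ : ∀ g₁ : G₁, ∃ x ∈ H₁, ∃ z ∈ X.fix, g₁ = x * z)
    (hG₀ : ∀ g₀ : G₀, ∃ x ∈ H₀, ∃ z ∈ X.zstab, g₀ = x * z) :
    Subgroup.map H₀.subtype (X.restrict H₁ H₀ hd hact).zstab = H₀ ⊓ X.zstab := by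
  ext g
  simp only [Subgroup.mem_map, Subgroup.mem_inf]
  constructor
  · rintro ⟨⟨h, hH⟩, hmem, rfl⟩
    obtain ⟨hst, hz⟩ := Subgroup.mem_inf.mp hmem
    refine ⟨hH, Subgroup.mem_inf.mpr ⟨?_, Subgroup.mem_center_iff.mpr ?_⟩⟩
    · intro g₁
      obtain ⟨x, hx, z, hzf, rfl⟩ := hG₁ g₁
      have hxfix : X.act h x = x := by
        have := congrArg Subtype.val (hst ⟨x, hx⟩)
        exact this
      show X.act h (x * z) = x * z
      rw [map_mul, hxfix, hzf h]
    · intro g₀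
      obtain ⟨x, hx, z, hzc, rfl⟩ := hG₀ g₀
      have hzc' := Subgroup.mem_center_iff.mp (Subgroup.mem_inf.mp hzc).2
      have hxh : x * h = h * x := by
        have := congrArg Subtype.val (Subgroup.mem_center_iff.mp hz ⟨x, hx⟩)
        exact this
      show x * z * h = h * (x * z)
      calc x * z * h = x * (h * z) := by rw [mul_assoc, hzc' h]
        _ = h * (x * z) := by rw [← mul_assoc, hxh, mul_assoc]
  · rintro ⟨hH, hmem⟩
    obtain ⟨hst, hz⟩ := Subgroup.mem_inf.mp hmem
    refine ⟨⟨g, hH⟩, Subgroup.mem_inf.mpr ⟨?_, Subgroup.mem_center_iff.mpr ?_⟩, rfl⟩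
    · intro h₁
      exact Subtype.ext (hst (h₁ : G₁))
    · intro h₀
      exact Subtype.ext (Subgroup.mem_center_iff.mp hz (h₀ : G₀))
end

section
/- Let H : H₁ → H₀ be a subcrossed module of a crossed module G : G₁ → G₀ such that G = H·Z(G), i.e. G₁ = H₁·G₁^{G₀} and G₀ = H₀·(St_{G₀}(G₁) ∩ Z(G₀)). Then the crossed modules G and H are isoclinic. -/
open scoped commutatorElement

section IsoclinicAux

variable {H G : Type*} [Group H] [Group G]

/-- Transport an isomorphism along an injective hom whose image of `K` is `L`. -/
noncomputable def transportIso (f : H →* G) (hf : Function.Injective f)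
    (K : Subgroup H) (L : Subgroup G) (h : K.map f = L) : L ≃* K :=
  ((K.equivMapOfInjective f hf).trans (MulEquiv.subgroupCongr h)).symm

lemma transportIso_coe (f : H →* G) (hf : Function.Injective f)
    (K : Subgroup H) (L : Subgroup G) (h : K.map f = L) (x : L) :
    f ((transportIso f hf K L h x : K) : H) = (x : G) := by
  show f ((((K.equivMapOfInjective f hf).symm) ((MulEquiv.subgroupCongr h).symm x)) : H) = _
  rw [← Subgroup.coe_equivMapOfInjective_apply K f hf, MulEquiv.apply_symm_apply,
    MulEquiv.subgroupCongr_symm_apply]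

/-- Quotient isomorphism from a surjective hom with prescribed kernel. -/
noncomputable def quotIso (φ : H →* G) (hs : Function.Surjective φ)
    (N : Subgroup H) [N.Normal] (hk : φ.ker = N) : H ⧸ N ≃* G :=
  (QuotientGroup.quotientMulEquivOfEq hk.symm).trans
    (QuotientGroup.quotientKerEquivOfSurjective φ hs)

lemma quotIso_mk (φ : H →* G) (hs : Function.Surjective φ)
    (N : Subgroup H) [N.Normal] (hk : φ.ker = N) (x : H) :
    quotIso φ hs N hk (QuotientGroup.mk x) = φ x := rfl

lemma commutator_center_decomp (x y w w' : G) (hw : w ∈ Subgroup.center G)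
    (hw' : w' ∈ Subgroup.center G) : ⁅x * w, y * w'⁆ = ⁅x, y⁆ := by
  have cw : ∀ a : G, a * w = w * a := fun a => Subgroup.mem_center_iff.mp hw a
  have cw' : ∀ a : G, a * w' = w' * a := fun a => Subgroup.mem_center_iff.mp hw' a
  have hwi : ∀ a : G, a * w⁻¹ = w⁻¹ * a := fun a =>
    Subgroup.mem_center_iff.mp (inv_mem hw) a
  have hwi' : ∀ a : G, a * w'⁻¹ = w'⁻¹ * a := fun a =>
    Subgroup.mem_center_iff.mp (inv_mem hw') a
  simp only [commutatorElement_def, mul_inv_rev]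
  calc x * w * (y * w') * (w⁻¹ * x⁻¹) * (w'⁻¹ * y⁻¹)
      = x * (w * y) * (w' * w⁻¹) * x⁻¹ * w'⁻¹ * y⁻¹ := by group
    _ = x * (y * w) * (w⁻¹ * w') * x⁻¹ * w'⁻¹ * y⁻¹ := by rw [cw y, hwi w']
    _ = x * y * (w' * x⁻¹) * w'⁻¹ * y⁻¹ := by group
    _ = x * y * (x⁻¹ * w') * w'⁻¹ * y⁻¹ := by rw [← cw' x⁻¹]
    _ = x * y * x⁻¹ * y⁻¹ := by group

end IsoclinicAux

namespace XMod

variable {G₁ G₀ : Type*} [Group G₁] [Group G₀] (X : XMod G₁ G₀)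

lemma zstab_act {w : G₀} (hw : w ∈ X.zstab) (a : G₁) : X.act w a = a :=
  (Subgroup.mem_inf.mp hw).1 a

lemma act_displacement_eq {h₀ w : G₀} (hw : w ∈ X.zstab) {h₁ z : G₁} (hz : z ∈ X.fix) :
    X.act (h₀ * w) (h₁ * z) * (h₁ * z)⁻¹ = X.act h₀ h₁ * h₁⁻¹ := by
  rw [← X.act_act, X.zstab_act hw, map_mul, hz h₀, mul_inv_rev]
  group

end XMod

/-- if `H : H₁ → H₀` is a subcrossed module of `G : G₁ → G₀` with
`G = H · Z(G)`, i.e. `G₁ = H₁ · G₁^{G₀}` and `G₀ = H₀ · (St_{G₀}(G₁) ∩ Z(G₀))`,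
then `G` and `H` are isoclinic crossed modules. -/
theorem isoclinic_restrict {G₁ G₀ : Type*} [Group G₁] [Group G₀] (X : XMod G₁ G₀)
    (H₁ : Subgroup G₁) (H₀ : Subgroup G₀)
    (hd : ∀ h ∈ H₁, X.d h ∈ H₀)
    (hact : ∀ h₀ ∈ H₀, ∀ h₁ ∈ H₁, X.act h₀ h₁ ∈ H₁)
    (hG₁ : ∀ g₁ : G₁, ∃ x ∈ H₁, ∃ z ∈ X.fix, g₁ = x * z)
    (hG₀ : ∀ g₀ : G₀, ∃ x ∈ H₀, ∃ z ∈ X.zstab, g₀ = x * z) :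
    X.Isoclinic (X.restrict H₁ H₀ hd hact) := by
  set Y := X.restrict H₁ H₀ hd hact with hYdef
  -- characterization of Y.fix
  have hfixY : ∀ h : H₁, h ∈ Y.fix ↔ (h : G₁) ∈ X.fix := by
    intro h
    constructor
    · intro hh g₀
      obtain ⟨x, hx, w, hw, rfl⟩ := hG₀ g₀
      rw [← X.act_act, X.zstab_act hw]
      exact congrArg Subtype.val (hh ⟨x, hx⟩)
    · intro hh h₀
      exact Subtype.ext (hh ↑h₀)
  -- characterization of Y.zstab
  have hzsY : ∀ h : H₀, h ∈ Y.zstab ↔ (h : G₀) ∈ X.zstab := by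
    intro h
    constructor
    · intro hh
      obtain ⟨hst, hc⟩ := Subgroup.mem_inf.mp hh
      refine Subgroup.mem_inf.mpr ⟨fun g₁ => ?_, Subgroup.mem_center_iff.mpr fun g => ?_⟩
      · obtain ⟨y, hy, z, hz, rfl⟩ := hG₁ g₁
        rw [map_mul, hz ↑h]
        have h1 : X.act ↑h y = y := congrArg Subtype.val (hst ⟨y, hy⟩)
        rw [h1]
      · obtain ⟨x, hx, w, hw, rfl⟩ := hG₀ g
        have h2 : w * ↑h = ↑h * w :=
          (Subgroup.mem_center_iff.mp (Subgroup.mem_inf.mp hw).2 ↑h).symm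
        have h3 : x * ↑h = ↑h * x :=
          congrArg Subtype.val (Subgroup.mem_center_iff.mp hc ⟨x, hx⟩)
        rw [mul_assoc, h2, ← mul_assoc, h3, mul_assoc]
    · intro hh
      refine Subgroup.mem_inf.mpr ⟨fun h₁ => Subtype.ext ((Subgroup.mem_inf.mp hh).1 ↑h₁),
        Subgroup.mem_center_iff.mpr fun g => Subtype.ext
          (Subgroup.mem_center_iff.mp (Subgroup.mem_inf.mp hh).2 ↑g)⟩
  -- the quotient isomorphism on level 1
  let φ₁ : H₁ →* G₁ ⧸ X.fix := (QuotientGroup.mk' X.fix).comp H₁.subtype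
  have hs₁ : Function.Surjective φ₁ := by
    intro q
    induction q using QuotientGroup.induction_on with
    | H g =>
      obtain ⟨y, hy, z, hz, rfl⟩ := hG₁ g
      refine ⟨⟨y, hy⟩, ?_⟩
      show (QuotientGroup.mk y : G₁ ⧸ X.fix) = QuotientGroup.mk (y * z)
      exact QuotientGroup.eq.mpr (by simpa using hz)
  have hker₁ : φ₁.ker = Y.fix := by
    ext h
    rw [hfixY]
    show (QuotientGroup.mk (↑h : G₁) : G₁ ⧸ X.fix) = 1 ↔ _
    exact QuotientGroup.eq_one_iff _
  let e₁ : (H₁ ⧸ Y.fix) ≃* (G₁ ⧸ X.fix) := quotIso φ₁ hs₁ Y.fix hker₁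
  -- the quotient isomorphism on level 0
  let φ₀ : H₀ →* G₀ ⧸ X.zstab := (QuotientGroup.mk' X.zstab).comp H₀.subtype
  have hs₀ : Function.Surjective φ₀ := by
    intro q
    induction q using QuotientGroup.induction_on with
    | H g =>
      obtain ⟨y, hy, z, hz, rfl⟩ := hG₀ g
      refine ⟨⟨y, hy⟩, ?_⟩
      show (QuotientGroup.mk y : G₀ ⧸ X.zstab) = QuotientGroup.mk (y * z)
      exact QuotientGroup.eq.mpr (by simpa using hz)
  have hker₀ : φ₀.ker = Y.zstab := by
    ext h
    rw [hzsY]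
    show (QuotientGroup.mk (↑h : G₀) : G₀ ⧸ X.zstab) = 1 ↔ _
    exact QuotientGroup.eq_one_iff _
  let e₀ : (H₀ ⧸ Y.zstab) ≃* (G₀ ⧸ X.zstab) := quotIso φ₀ hs₀ Y.zstab hker₀
  -- displacement subgroups agree
  have hmap₁ : Subgroup.map H₁.subtype Y.disp = X.disp := by
    apply le_antisymm
    · rw [Subgroup.map_le_iff_le_comap]
      refine (Subgroup.closure_le _).mpr ?_
      rintro x ⟨h₀, h₁, rfl⟩
      show ((Y.act h₀ h₁ * h₁⁻¹ : H₁) : G₁) ∈ X.disp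
      exact X.disp_gen_mem (↑h₀) (↑h₁)
    · refine (Subgroup.closure_le _).mpr ?_
      rintro x ⟨g₀, g₁, rfl⟩
      obtain ⟨a, ha, w, hw, rfl⟩ := hG₀ g₀
      obtain ⟨y, hy, z, hz, rfl⟩ := hG₁ g₁
      rw [SetLike.mem_coe, X.act_displacement_eq hw hz]
      exact Subgroup.mem_map.mpr
        ⟨Y.act ⟨a, ha⟩ ⟨y, hy⟩ * (⟨y, hy⟩ : H₁)⁻¹, Y.disp_gen_mem _ _, rfl⟩
  -- commutator subgroups agree
  have hmap₀ : Subgroup.map H₀.subtype (commutator H₀) = commutator G₀ := by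
    apply le_antisymm
    · rw [commutator_def, Subgroup.map_commutator, commutator_def]
      exact Subgroup.commutator_mono le_top le_top
    · rw [commutator_def G₀]
      refine Subgroup.commutator_le.mpr fun g _ g' _ => ?_
      obtain ⟨a, ha, w, hw, rfl⟩ := hG₀ g
      obtain ⟨a', ha', w', hw', rfl⟩ := hG₀ g'
      rw [commutator_center_decomp a a' w w' (Subgroup.mem_inf.mp hw).2
        (Subgroup.mem_inf.mp hw').2]
      exact Subgroup.mem_map.mpr ⟨⁅(⟨a, ha⟩ : H₀), (⟨a', ha'⟩ : H₀)⁆,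
        mem_commutator_of _ _, rfl⟩
  let ξ₁ : X.disp ≃* Y.disp :=
    transportIso H₁.subtype H₁.subtype_injective Y.disp X.disp hmap₁
  let ξ₀ : commutator G₀ ≃* commutator H₀ :=
    transportIso H₀.subtype H₀.subtype_injective (commutator H₀) (commutator G₀) hmap₀
  have hξ₁coe : ∀ x : X.disp, ((ξ₁ x : H₁) : G₁) = (x : G₁) := fun x =>
    transportIso_coe H₁.subtype H₁.subtype_injective Y.disp X.disp hmap₁ x
  have hξ₀coe : ∀ x : commutator G₀, ((ξ₀ x : H₀) : G₀) = (x : G₀) := fun x =>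
    transportIso_coe H₀.subtype H₀.subtype_injective (commutator H₀) (commutator G₀) hmap₀ x
  refine ⟨e₁.symm, e₀.symm, ξ₁, ξ₀, ?_, ?_, ?_, ?_⟩
  · -- dbar compatibility
    intro q
    induction q using QuotientGroup.induction_on with
    | H g =>
      obtain ⟨y, hy, z, hz, rfl⟩ := hG₁ g
      have hq : (QuotientGroup.mk y : G₁ ⧸ X.fix) = e₁ (QuotientGroup.mk ⟨y, hy⟩) := rfl
      have h1 : (y * z)⁻¹ * y = z⁻¹ := by group
      have hmkeq : (QuotientGroup.mk (y * z) : G₁ ⧸ X.fix) = QuotientGroup.mk y :=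
        QuotientGroup.eq.mpr (by rw [h1]; exact inv_mem hz)
      have hη : e₁.symm (QuotientGroup.mk (y * z)) = QuotientGroup.mk ⟨y, hy⟩ := by
        rw [hmkeq, hq, MulEquiv.symm_apply_apply]
      rw [hη]
      show QuotientGroup.mk (Y.d ⟨y, hy⟩) = e₀.symm (QuotientGroup.mk (X.d (y * z)))
      rw [eq_comm, MulEquiv.symm_apply_eq]
      show QuotientGroup.mk (X.d (y * z)) = QuotientGroup.mk (X.d y)
      have h2 : (X.d (y * z))⁻¹ * X.d y = (X.d z)⁻¹ := by rw [map_mul]; group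
      exact QuotientGroup.eq.mpr (by rw [h2]; exact inv_mem (X.d_fix_mem hz))
  · -- dres compatibility
    intro x
    refine Subtype.ext (Subtype.ext ?_)
    show X.d ((ξ₁ x : H₁) : G₁) = ((ξ₀ (X.dres x) : H₀) : G₀)
    rw [hξ₁coe x, hξ₀coe (X.dres x)]
    rfl
  · -- action compatibility
    intro g₁ g₀ h₁ h₀ he1 he0
    have h1 : (QuotientGroup.mk g₁ : G₁ ⧸ X.fix) = QuotientGroup.mk (↑h₁ : G₁) := by
      rw [(MulEquiv.symm_apply_eq e₁).mp he1]; rfl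
    have hz : (↑h₁ : G₁)⁻¹ * g₁ ∈ X.fix := by
      simpa using inv_mem (QuotientGroup.eq.mp h1)
    have h0 : (QuotientGroup.mk g₀ : G₀ ⧸ X.zstab) = QuotientGroup.mk (↑h₀ : G₀) := by
      rw [(MulEquiv.symm_apply_eq e₀).mp he0]; rfl
    have hw : (↑h₀ : G₀)⁻¹ * g₀ ∈ X.zstab := by
      simpa using inv_mem (QuotientGroup.eq.mp h0)
    refine Subtype.ext ?_
    show ((ξ₁ ⟨X.act g₀ g₁ * g₁⁻¹, X.disp_gen_mem g₀ g₁⟩ : H₁) : G₁)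
      = X.act ↑h₀ ↑h₁ * (↑h₁ : G₁)⁻¹
    rw [hξ₁coe]
    show X.act g₀ g₁ * g₁⁻¹ = _
    have hg₀ : g₀ = ↑h₀ * ((↑h₀ : G₀)⁻¹ * g₀) := by group
    have hg₁ : g₁ = ↑h₁ * ((↑h₁ : G₁)⁻¹ * g₁) := by group
    rw [hg₀, hg₁, X.act_displacement_eq hw hz]
  · -- commutator compatibility
    intro g₀ g₀' h₀ h₀' he he'
    have h0 : (QuotientGroup.mk g₀ : G₀ ⧸ X.zstab) = QuotientGroup.mk (↑h₀ : G₀) := by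
      rw [(MulEquiv.symm_apply_eq e₀).mp he]; rfl
    have hw : (↑h₀ : G₀)⁻¹ * g₀ ∈ X.zstab := by
      simpa using inv_mem (QuotientGroup.eq.mp h0)
    have h0' : (QuotientGroup.mk g₀' : G₀ ⧸ X.zstab) = QuotientGroup.mk (↑h₀' : G₀) := by
      rw [(MulEquiv.symm_apply_eq e₀).mp he']; rfl
    have hw' : (↑h₀' : G₀)⁻¹ * g₀' ∈ X.zstab := by
      simpa using inv_mem (QuotientGroup.eq.mp h0')
    refine Subtype.ext ?_
    show ((ξ₀ ⟨⁅g₀, g₀'⁆, mem_commutator_of g₀ g₀'⟩ : H₀) : G₀) = ⁅(↑h₀ : G₀), ↑h₀'⁆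
    rw [hξ₀coe]
    show ⁅g₀, g₀'⁆ = _
    have hg₀ : g₀ = ↑h₀ * ((↑h₀ : G₀)⁻¹ * g₀) := by group
    have hg₀' : g₀' = ↑h₀' * ((↑h₀' : G₀)⁻¹ * g₀') := by group
    rw [hg₀, hg₀', commutator_center_decomp _ _ _ _ (Subgroup.mem_inf.mp hw).2
      (Subgroup.mem_inf.mp hw').2]
end

section
/- Let G : G₁ → G₀ and H : H₁ → H₀ be isoclinic crossed modules, both aspherical (i.e. both boundary maps are injective). Then the groups G₀ and H₀ are isoclinic. -/
open scoped commutatorElement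

lemma zstab_eq_center {G₁ G₀ : Type*} [Group G₁] [Group G₀] (X : XMod G₁ G₀)
    (hX : Function.Injective X.d) : X.zstab = Subgroup.center G₀ := by
  apply le_antisymm
  · exact fun g hg => (Subgroup.mem_inf.mp hg).2
  · intro g hg
    refine Subgroup.mem_inf.mpr ⟨fun g₁ => ?_, hg⟩
    apply hX
    rw [X.cm1, ← Subgroup.mem_center_iff.mp hg (X.d g₁)]
    simp

/-- if two aspherical crossed modules are isoclinic, then their base
groups are isoclinic. -/
theorem isoclinicGrp_base_of_aspherical {G₁ G₀ H₁ H₀ : Type*}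
    [Group G₁] [Group G₀] [Group H₁] [Group H₀]
    (X : XMod G₁ G₀) (Y : XMod H₁ H₀) (h : X.Isoclinic Y)
    (hX : Function.Injective X.d) (hY : Function.Injective Y.d) :
    IsoclinicGrp G₀ H₀ := by
  have hZX : X.zstab = Subgroup.center G₀ := zstab_eq_center X hX
  have hZY : Y.zstab = Subgroup.center H₀ := zstab_eq_center Y hY
  obtain ⟨η₁, η₀, ξ₁, ξ₀, _, _, _, hc⟩ := h
  refine ⟨((QuotientGroup.quotientMulEquivOfEq hZX.symm).trans η₀).trans
      (QuotientGroup.quotientMulEquivOfEq hZY), ξ₀, ?_⟩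
  intro x y u v hx hy
  refine hc x y u v ?_ ?_
  · have := hx
    simp only [MulEquiv.trans_apply, QuotientGroup.quotientMulEquivOfEq_mk] at this
    exact (QuotientGroup.quotientMulEquivOfEq hZY).injective (by
      simpa [QuotientGroup.quotientMulEquivOfEq_mk] using this)
  · have := hy
    simp only [MulEquiv.trans_apply, QuotientGroup.quotientMulEquivOfEq_mk] at this
    exact (QuotientGroup.quotientMulEquivOfEq hZY).injective (by
      simpa [QuotientGroup.quotientMulEquivOfEq_mk] using this)
end

section
/- Let G : G₁ → G₀ and H : H₁ → H₀ be isoclinic crossed modules, both simply connected (i.e. both boundary maps are surjective). Then the groups G₁ and H₁ are isoclinic. -/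
open scoped commutatorElement

namespace XMod

variable {G₁ G₀ : Type*} [Group G₁] [Group G₀] (X : XMod G₁ G₀)

lemma fix_eq_center (hX : Function.Surjective X.d) :
    X.fix = Subgroup.center G₁ := by
  refine le_antisymm X.fix_le_center fun z hz => ?_
  rw [X.mem_fix]
  intro g₀
  obtain ⟨g, rfl⟩ := hX g₀
  rw [X.cm2, Subgroup.mem_center_iff.mp hz g]
  simp

lemma disp_eq_commutator (hX : Function.Surjective X.d) :
    X.disp = commutator G₁ := by
  apply le_antisymm
  · rw [XMod.disp, Subgroup.closure_le]
    rintro x ⟨g₀, g₁, rfl⟩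
    obtain ⟨g, rfl⟩ := hX g₀
    rw [X.cm2]
    have : g * g₁ * g⁻¹ * g₁⁻¹ = ⁅g, g₁⁆ := by group
    rw [this]
    exact mem_commutator_of g g₁
  · rw [commutator_def, Subgroup.commutator_le]
    intro x _ y _
    have : ⁅x, y⁆ = X.act (X.d x) y * y⁻¹ := by rw [X.cm2]; group
    rw [this]
    exact X.disp_gen_mem (X.d x) y

end XMod

/-- if two simply connected crossed modules are isoclinic, then their
top groups are isoclinic. -/
theorem isoclinicGrp_top_of_simplyConnected {G₁ G₀ H₁ H₀ : Type*}
    [Group G₁] [Group G₀] [Group H₁] [Group H₀]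
    (X : XMod G₁ G₀) (Y : XMod H₁ H₀) (h : X.Isoclinic Y)
    (hX : Function.Surjective X.d) (hY : Function.Surjective Y.d) :
    IsoclinicGrp G₁ H₁ := by
  obtain ⟨η₁, η₀, ξ₁, ξ₀, hd, _, hact, _⟩ := h
  have hfG := X.fix_eq_center hX
  have hfH := Y.fix_eq_center hY
  have hdG := X.disp_eq_commutator hX
  have hdH := Y.disp_eq_commutator hY
  refine ⟨((QuotientGroup.quotientMulEquivOfEq hfG.symm).trans η₁).trans
      (QuotientGroup.quotientMulEquivOfEq hfH),
    ((MulEquiv.subgroupCongr hdG.symm).trans ξ₁).trans (MulEquiv.subgroupCongr hdH),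
    ?_⟩
  intro x y u v hu hv
  simp only [MulEquiv.trans_apply] at hu hv ⊢
  have hmkG : ∀ a : G₁, (QuotientGroup.quotientMulEquivOfEq hfG.symm)
      (QuotientGroup.mk a) = QuotientGroup.mk a := fun a => rfl
  have hu' : η₁ (QuotientGroup.mk x) = QuotientGroup.mk u := by
    have := hu
    rw [hmkG] at this
    rcases QuotientGroup.mk_surjective (η₁ (QuotientGroup.mk x)) with ⟨w, hw⟩
    rw [← hw] at this ⊢
    have : (QuotientGroup.mk w : H₁ ⧸ Subgroup.center H₁) = QuotientGroup.mk u := this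
    rw [QuotientGroup.eq] at this ⊢
    rwa [← hfH] at this
  have hv' : η₁ (QuotientGroup.mk y) = QuotientGroup.mk v := by
    have := hv
    rw [hmkG] at this
    rcases QuotientGroup.mk_surjective (η₁ (QuotientGroup.mk y)) with ⟨w, hw⟩
    rw [← hw] at this ⊢
    have : (QuotientGroup.mk w : H₁ ⧸ Subgroup.center H₁) = QuotientGroup.mk v := this
    rw [QuotientGroup.eq] at this ⊢
    rwa [← hfH] at this
  have h₀ : η₀ (QuotientGroup.mk (X.d x)) = QuotientGroup.mk (Y.d u) := by
    have := hd (QuotientGroup.mk x)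
    rw [hu'] at this
    exact this.symm
  have key := hact y (X.d x) v (Y.d u) hv' h₀
  have hGc : X.act (X.d x) y * y⁻¹ = ⁅x, y⁆ := by rw [X.cm2]; group
  have hHc : Y.act (Y.d u) v * v⁻¹ = ⁅u, v⁆ := by rw [Y.cm2]; group
  rw [hHc] at key
  rw [← key]
  have e : ((MulEquiv.subgroupCongr hdG.symm) ⟨⁅x, y⁆, mem_commutator_of x y⟩ : X.disp)
      = ⟨X.act (X.d x) y * y⁻¹, X.disp_gen_mem (X.d x) y⟩ :=
    Subtype.ext (show ⁅x, y⁆ = X.act (X.d x) y * y⁻¹ from hGc.symm)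
  rw [e]
  rfl
end

section
/- Let G : G₁ → G₀ and H : H₁ → H₀ be isoclinic finite crossed modules (all four groups G₁, G₀, H₁, H₀ are finite). Then G₁ is isoclinic to H₁ and G₀ is isoclinic to H₀ as groups. -/
open scoped commutatorElement

section IsoclinicAux

variable {G H : Type*} [Group G] [Group H]

lemma conj_central' {w : G} (hw : w ∈ Subgroup.center G) (a : G) : w * a * w⁻¹ = a := by
  rw [← Subgroup.mem_center_iff.mp hw a, mul_inv_cancel_right]

lemma comm_congr_central {z w : G} (hz : z ∈ Subgroup.center G) (hw : w ∈ Subgroup.center G)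
    (u v : G) : ⁅u * z, v * w⁆ = ⁅u, v⁆ := by
  have h1 : z * (v * w) * z⁻¹ = v * w := conj_central' hz _
  have h2 : w * u⁻¹ * w⁻¹ = u⁻¹ := conj_central' hw _
  calc ⁅u * z, v * w⁆ = u * (z * (v * w) * z⁻¹) * u⁻¹ * (w⁻¹ * v⁻¹) := by
        rw [commutatorElement_def]; group
    _ = u * (v * w) * u⁻¹ * (w⁻¹ * v⁻¹) := by rw [h1]
    _ = u * v * (w * u⁻¹ * w⁻¹) * v⁻¹ := by group
    _ = u * v * u⁻¹ * v⁻¹ := by rw [h2]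
    _ = ⁅u, v⁆ := (commutatorElement_def u v).symm

def restrict_mulEquiv {G H : Type*} [Group G] [Group H] {A : Subgroup G} {B : Subgroup H}
    (e : A ≃* B) (C : Subgroup G) (D : Subgroup H) (hC : C ≤ A) (hD : D ≤ B)
    (h1 : ∀ (x : G) (hx : x ∈ C), (e ⟨x, hC hx⟩ : H) ∈ D)
    (h2 : ∀ (y : H) (hy : y ∈ D), (e.symm ⟨y, hD hy⟩ : G) ∈ C) :
    C ≃* D :=
  { toFun := fun x => ⟨(e ⟨x.1, hC x.2⟩ : H), h1 x.1 x.2⟩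
    invFun := fun y => ⟨(e.symm ⟨y.1, hD y.2⟩ : G), h2 y.1 y.2⟩
    left_inv := fun x => by
      apply Subtype.ext
      show (e.symm ⟨(e ⟨x.1, hC x.2⟩ : H), hD (h1 x.1 x.2)⟩ : G) = (x : G)
      rw [Subtype.coe_eta, e.symm_apply_apply]
    right_inv := fun y => by
      apply Subtype.ext
      show (e ⟨(e.symm ⟨y.1, hD y.2⟩ : G), hC (h2 y.1 y.2)⟩ : H) = (y : H)
      rw [Subtype.coe_eta, e.apply_symm_apply]
    map_mul' := fun x y => by
      apply Subtype.ext
      show (e ⟨x.1 * y.1, hC (mul_mem x.2 y.2)⟩ : H) = (e ⟨x.1, hC x.2⟩ : H) * (e ⟨y.1, hC y.2⟩ : H)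
      rw [show (⟨x.1 * y.1, hC (mul_mem x.2 y.2)⟩ : A) = ⟨x.1, hC x.2⟩ * ⟨y.1, hC y.2⟩ from rfl,
        map_mul]
      rfl }

@[simp] def restrict_mulEquiv_coe {G H : Type*} [Group G] [Group H] {A : Subgroup G}
    {B : Subgroup H} (e : A ≃* B) (C : Subgroup G) (D : Subgroup H) (hC : C ≤ A) (hD : D ≤ B)
    (h1 : ∀ (x : G) (hx : x ∈ C), (e ⟨x, hC hx⟩ : H) ∈ D)
    (h2 : ∀ (y : H) (hy : y ∈ D), (e.symm ⟨y, hD hy⟩ : G) ∈ C)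
    (x : C) : (restrict_mulEquiv e C D hC hD h1 h2 x : H) = e ⟨x.1, hC x.2⟩ := rfl

lemma exists_hom_center_quot (A : Subgroup G) (B : Subgroup H) [A.Normal] [B.Normal]
    (hB : B ≤ Subgroup.center H)
    (e : G ⧸ A →* H ⧸ B)
    (hc : ∀ (g : G) (h : H), e (QuotientGroup.mk g) = QuotientGroup.mk h →
      g ∈ Subgroup.center G → h ∈ Subgroup.center H) :
    ∃ F : (G ⧸ Subgroup.center G) →* (H ⧸ Subgroup.center H),
      ∀ (g : G) (h : H), e (QuotientGroup.mk g) = QuotientGroup.mk h →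
        F (QuotientGroup.mk g) = QuotientGroup.mk h := by
  have key : ∀ (g : G) (h : H), e (QuotientGroup.mk g) = QuotientGroup.mk h →
      ((QuotientGroup.map B (Subgroup.center H) (MonoidHom.id H) fun x hx => hB hx).comp
        (e.comp (QuotientGroup.mk' A))) g = QuotientGroup.mk h := by
    intro g h hgh
    simp only [MonoidHom.comp_apply, QuotientGroup.mk'_apply]
    rw [show ((g : G) : G ⧸ A) = QuotientGroup.mk g from rfl, hgh]
    rfl
  refine ⟨QuotientGroup.lift (Subgroup.center G)
    ((QuotientGroup.map B (Subgroup.center H) (MonoidHom.id H) fun x hx => hB hx).comp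
      (e.comp (QuotientGroup.mk' A))) ?_, ?_⟩
  · intro g hg
    obtain ⟨h, hh⟩ := QuotientGroup.mk_surjective (e (QuotientGroup.mk g))
    rw [MonoidHom.mem_ker, key g h hh.symm]
    exact (QuotientGroup.eq_one_iff _).mpr (hc g h hh.symm hg)
  · intro g h hgh
    rw [show (QuotientGroup.mk g : G ⧸ Subgroup.center G) = (g : G ⧸ Subgroup.center G) from rfl,
      QuotientGroup.lift_mk]
    exact key g h hgh

lemma quotient_center_equiv (A : Subgroup G) (B : Subgroup H) [A.Normal] [B.Normal]
    (hA : A ≤ Subgroup.center G) (hB : B ≤ Subgroup.center H)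
    (e : (G ⧸ A) ≃* (H ⧸ B))
    (hc : ∀ (g : G) (h : H), e (QuotientGroup.mk g) = QuotientGroup.mk h →
      (g ∈ Subgroup.center G ↔ h ∈ Subgroup.center H)) :
    ∃ η : (G ⧸ Subgroup.center G) ≃* (H ⧸ Subgroup.center H),
      ∀ (g : G) (h : H), e (QuotientGroup.mk g) = QuotientGroup.mk h →
        η (QuotientGroup.mk g) = QuotientGroup.mk h := by
  have hc' : ∀ (h : H) (g : G), e.symm (QuotientGroup.mk h) = QuotientGroup.mk g →
      h ∈ Subgroup.center H → g ∈ Subgroup.center G := by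
    intro h g hgh hh
    have : e (QuotientGroup.mk g) = QuotientGroup.mk h := by
      rw [← hgh, MulEquiv.apply_symm_apply]
    exact (hc g h this).mpr hh
  obtain ⟨F, hF⟩ := exists_hom_center_quot A B hB e.toMonoidHom
    (fun g h hgh hg => (hc g h hgh).mp hg)
  obtain ⟨F', hF'⟩ := exists_hom_center_quot B A hA e.symm.toMonoidHom hc'
  have h1 : F'.comp F = MonoidHom.id _ := by
    apply QuotientGroup.monoidHom_ext
    ext g
    obtain ⟨h, hh⟩ := QuotientGroup.mk_surjective (e (QuotientGroup.mk g))
    have he : e (QuotientGroup.mk g) = QuotientGroup.mk h := hh.symm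
    have hs : e.symm (QuotientGroup.mk h) = QuotientGroup.mk g := by
      rw [← he, MulEquiv.symm_apply_apply]
    simp only [MonoidHom.comp_apply, QuotientGroup.mk'_apply, MonoidHom.id_apply]
    rw [show ((g : G) : G ⧸ Subgroup.center G) = QuotientGroup.mk g from rfl,
      hF g h he, hF' h g hs]
  have h2 : F.comp F' = MonoidHom.id _ := by
    apply QuotientGroup.monoidHom_ext
    ext h
    obtain ⟨g, hg⟩ := QuotientGroup.mk_surjective (e.symm (QuotientGroup.mk h))
    have hs : e.symm (QuotientGroup.mk h) = QuotientGroup.mk g := hg.symm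
    have he : e (QuotientGroup.mk g) = QuotientGroup.mk h := by
      rw [← hs, MulEquiv.apply_symm_apply]
    simp only [MonoidHom.comp_apply, QuotientGroup.mk'_apply, MonoidHom.id_apply]
    rw [show ((h : H) : H ⧸ Subgroup.center H) = QuotientGroup.mk h from rfl,
      hF' h g hs, hF g h he]
  exact ⟨MonoidHom.toMulEquiv F F' h1 h2, fun g h hgh => hF g h hgh⟩

end IsoclinicAux

/-- if two finite crossed modules are isoclinic, then `G₁` is isoclinic
to `H₁` and `G₀` is isoclinic to `H₀` as groups. -/
theorem isoclinicGrp_of_isoclinic_finite {G₁ G₀ H₁ H₀ : Type*}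
    [Group G₁] [Group G₀] [Group H₁] [Group H₀]
    [Finite G₁] [Finite G₀] [Finite H₁] [Finite H₀]
    (X : XMod G₁ G₀) (Y : XMod H₁ H₀) (h : X.Isoclinic Y) :
    IsoclinicGrp G₁ H₁ ∧ IsoclinicGrp G₀ H₀ := by
  obtain ⟨η₁, η₀, ξ₁, ξ₀, hd, hdres, hcomp1, hcomp2⟩ := h
  have hcd : ∀ g g' : G₁, ⁅g, g'⁆ ∈ X.disp := fun g g' => by
    rw [commutatorElement_def, ← X.cm2]; exact X.disp_gen_mem _ _
  have hcdY : ∀ p p' : H₁, ⁅p, p'⁆ ∈ Y.disp := fun p p' => by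
    rw [commutatorElement_def, ← Y.cm2]; exact Y.disp_gen_mem _ _
  have hle : commutator G₁ ≤ X.disp := by
    rw [commutator_def, Subgroup.commutator_le]; intro g _ g' _; exact hcd g g'
  have hleY : commutator H₁ ≤ Y.disp := by
    rw [commutator_def, Subgroup.commutator_le]; intro p _ p' _; exact hcdY p p'
  have hleC : Subgroup.closure (commutatorSet G₁) ≤ X.disp := by
    rw [← commutator_eq_closure]; exact hle
  have hleCY : Subgroup.closure (commutatorSet H₁) ≤ Y.disp := by
    rw [← commutator_eq_closure]; exact hleY
  -- key commutator compatibility for ξ₁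
  have hA : ∀ (g g' : G₁) (p p' : H₁),
      η₁ (QuotientGroup.mk g) = QuotientGroup.mk p →
      η₁ (QuotientGroup.mk g') = QuotientGroup.mk p' →
      (ξ₁ ⟨⁅g, g'⁆, hcd g g'⟩ : H₁) = ⁅p, p'⁆ := by
    intro g g' p p' hg hg'
    have hd0 : η₀ (QuotientGroup.mk (X.d g)) = QuotientGroup.mk (Y.d p) := by
      have hq := hd (QuotientGroup.mk g)
      rw [hg] at hq
      rw [show X.dbar (QuotientGroup.mk g) = QuotientGroup.mk (X.d g) from
        QuotientGroup.map_mk _ _ _ _ _] at hq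
      rw [show Y.dbar (QuotientGroup.mk p) = QuotientGroup.mk (Y.d p) from
        QuotientGroup.map_mk _ _ _ _ _] at hq
      exact hq.symm
    have key := hcomp1 g' (X.d g) p' (Y.d p) hg' hd0
    have e1 : (⟨⁅g, g'⁆, hcd g g'⟩ : X.disp)
        = ⟨X.act (X.d g) g' * g'⁻¹, X.disp_gen_mem _ _⟩ :=
      Subtype.ext (show ⁅g, g'⁆ = X.act (X.d g) g' * g'⁻¹ by
        rw [commutatorElement_def, X.cm2])
    rw [e1, key, Y.cm2, commutatorElement_def]
  -- center correspondence for η₁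
  have hcenter₁ : ∀ (g : G₁) (p : H₁),
      η₁ (QuotientGroup.mk g) = QuotientGroup.mk p →
      (g ∈ Subgroup.center G₁ ↔ p ∈ Subgroup.center H₁) := by
    intro g p hg
    constructor
    · intro hg₁
      rw [Subgroup.mem_center_iff]
      intro b
      obtain ⟨q, hq⟩ := η₁.surjective (QuotientGroup.mk b)
      obtain ⟨g', rfl⟩ := QuotientGroup.mk_surjective q
      have h1 := hA g g' p b hg hq
      have h0 : (⟨⁅g, g'⁆, hcd g g'⟩ : X.disp) = 1 := Subtype.ext
        (show ⁅g, g'⁆ = 1 by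
          rw [commutatorElement_eq_one_iff_commute]
          exact (Subgroup.mem_center_iff.mp hg₁ g').symm)
      rw [h0, map_one] at h1
      have hcm : Commute p b := commutatorElement_eq_one_iff_commute.mp h1.symm
      exact hcm.symm
    · intro hp
      rw [Subgroup.mem_center_iff]
      intro b
      obtain ⟨q, hq⟩ := QuotientGroup.mk_surjective (η₁ (QuotientGroup.mk b))
      have h1 := hA g b p q hg hq.symm
      have h2 : ⁅p, q⁆ = 1 := commutatorElement_eq_one_iff_commute.mpr
        ((Subgroup.mem_center_iff.mp hp q).symm)
      rw [h2] at h1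
      have h3 : (⟨⁅g, b⁆, hcd g b⟩ : X.disp) = 1 := ξ₁.injective (by
        rw [map_one]; exact Subtype.ext h1)
      have h4 : ⁅g, b⁆ = 1 := congrArg Subtype.val h3
      exact (commutatorElement_eq_one_iff_commute.mp h4).symm
  -- center correspondence for η₀
  have hcenter₀ : ∀ (g : G₀) (p : H₀),
      η₀ (QuotientGroup.mk g) = QuotientGroup.mk p →
      (g ∈ Subgroup.center G₀ ↔ p ∈ Subgroup.center H₀) := by
    intro g p hg
    constructor
    · intro hg₁
      rw [Subgroup.mem_center_iff]
      intro b
      obtain ⟨q, hq⟩ := η₀.surjective (QuotientGroup.mk b)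
      obtain ⟨g', rfl⟩ := QuotientGroup.mk_surjective q
      have h1 := hcomp2 g g' p b hg hq
      have h0 : (⟨⁅g, g'⁆, mem_commutator_of g g'⟩ : commutator G₀) = 1 := Subtype.ext
        (show ⁅g, g'⁆ = 1 by
          rw [commutatorElement_eq_one_iff_commute]
          exact (Subgroup.mem_center_iff.mp hg₁ g').symm)
      rw [h0, map_one] at h1
      have hcm : Commute p b := commutatorElement_eq_one_iff_commute.mp h1.symm
      exact hcm.symm
    · intro hp
      rw [Subgroup.mem_center_iff]
      intro b
      obtain ⟨q, hq⟩ := QuotientGroup.mk_surjective (η₀ (QuotientGroup.mk b))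
      have h1 := hcomp2 g b p q hg hq.symm
      have h2 : ⁅p, q⁆ = 1 := commutatorElement_eq_one_iff_commute.mpr
        ((Subgroup.mem_center_iff.mp hp q).symm)
      rw [h2] at h1
      have h3 : (⟨⁅g, b⁆, mem_commutator_of g b⟩ : commutator G₀) = 1 := ξ₀.injective (by
        rw [map_one]; exact Subtype.ext h1)
      have h4 : ⁅g, b⁆ = 1 := congrArg Subtype.val h3
      exact (commutatorElement_eq_one_iff_commute.mp h4).symm
  -- ξ₁ maps commutators to commutators
  have hmapX : ∀ (x : G₁) (hx : x ∈ Subgroup.closure (commutatorSet G₁)),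
      (ξ₁ ⟨x, hleC hx⟩ : H₁) ∈ commutator H₁ := by
    intro x hx
    induction hx using Subgroup.closure_induction with
    | mem y hy =>
      obtain ⟨a, b, rfl⟩ := hy
      obtain ⟨q, hq⟩ := QuotientGroup.mk_surjective (η₁ (QuotientGroup.mk a))
      obtain ⟨q', hq'⟩ := QuotientGroup.mk_surjective (η₁ (QuotientGroup.mk b))
      have h1 : (ξ₁ ⟨⁅a, b⁆, hleC (Subgroup.subset_closure ⟨a, b, rfl⟩)⟩ : H₁) = ⁅q, q'⁆ :=
        hA a b q q' hq.symm hq'.symm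
      rw [h1]; exact mem_commutator_of q q'
    | one =>
      have h0 : (⟨(1 : G₁), hleC (one_mem _)⟩ : X.disp) = 1 := rfl
      rw [h0, map_one]; exact one_mem _
    | mul a b ha hb iha ihb =>
      have h0 : (⟨a * b, hleC (mul_mem ha hb)⟩ : X.disp)
          = ⟨a, hleC ha⟩ * ⟨b, hleC hb⟩ := rfl
      rw [h0, map_mul]; exact mul_mem iha ihb
    | inv a ha iha =>
      have h0 : (⟨a⁻¹, hleC (inv_mem ha)⟩ : X.disp) = (⟨a, hleC ha⟩ : X.disp)⁻¹ := rfl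
      rw [h0, map_inv]; exact inv_mem iha
  -- ξ₁.symm maps commutators to commutators
  have hmapY : ∀ (y : H₁) (hy : y ∈ Subgroup.closure (commutatorSet H₁)),
      (ξ₁.symm ⟨y, hleCY hy⟩ : G₁) ∈ commutator G₁ := by
    intro y hy
    induction hy using Subgroup.closure_induction with
    | mem y hy =>
      obtain ⟨p, p', rfl⟩ := hy
      obtain ⟨qa, hqa⟩ := η₁.surjective (QuotientGroup.mk p)
      obtain ⟨a, rfl⟩ := QuotientGroup.mk_surjective qa
      obtain ⟨qb, hqb⟩ := η₁.surjective (QuotientGroup.mk p')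
      obtain ⟨b, rfl⟩ := QuotientGroup.mk_surjective qb
      have h1 : (ξ₁ ⟨⁅a, b⁆, hcd a b⟩ : H₁) = ⁅p, p'⁆ := hA a b p p' hqa hqb
      have h2 : ξ₁ ⟨⁅a, b⁆, hcd a b⟩
          = ⟨⁅p, p'⁆, hleCY (Subgroup.subset_closure ⟨p, p', rfl⟩)⟩ := Subtype.ext h1
      have h3 : ξ₁.symm ⟨⁅p, p'⁆, hleCY (Subgroup.subset_closure ⟨p, p', rfl⟩)⟩
          = ⟨⁅a, b⁆, hcd a b⟩ := by rw [← h2, MulEquiv.symm_apply_apply]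
      rw [h3]; exact mem_commutator_of a b
    | one =>
      have h0 : (⟨(1 : H₁), hleCY (one_mem _)⟩ : Y.disp) = 1 := rfl
      rw [h0, map_one]; exact one_mem _
    | mul a b ha hb iha ihb =>
      have h0 : (⟨a * b, hleCY (mul_mem ha hb)⟩ : Y.disp)
          = ⟨a, hleCY ha⟩ * ⟨b, hleCY hb⟩ := rfl
      rw [h0, map_mul]; exact mul_mem iha ihb
    | inv a ha iha =>
      have h0 : (⟨a⁻¹, hleCY (inv_mem ha)⟩ : Y.disp) = (⟨a, hleCY ha⟩ : Y.disp)⁻¹ := rfl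
      rw [h0, map_inv]; exact inv_mem iha
  have hCC : ∀ {x : G₁}, x ∈ commutator G₁ → x ∈ Subgroup.closure (commutatorSet G₁) := by
    intro x hx; rwa [← commutator_eq_closure]
  have hCCY : ∀ {y : H₁}, y ∈ commutator H₁ → y ∈ Subgroup.closure (commutatorSet H₁) := by
    intro y hy; rwa [← commutator_eq_closure]
  obtain ⟨ηG, hηG⟩ := quotient_center_equiv X.fix Y.fix X.fix_le_center Y.fix_le_center
    η₁ hcenter₁
  obtain ⟨ηG₀, hηG₀⟩ := quotient_center_equiv X.zstab Y.zstab
    (fun g hg => (Subgroup.mem_inf.mp hg).2) (fun g hg => (Subgroup.mem_inf.mp hg).2)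
    η₀ hcenter₀
  constructor
  · refine ⟨ηG, restrict_mulEquiv ξ₁ (commutator G₁) (commutator H₁) hle hleY
      (fun x hx => hmapX x (hCC hx)) (fun y hy => hmapY y (hCCY hy)), ?_⟩
    intro x y u v hx hy
    obtain ⟨u₀, hu₀⟩ := QuotientGroup.mk_surjective (η₁ (QuotientGroup.mk x))
    obtain ⟨v₀, hv₀⟩ := QuotientGroup.mk_surjective (η₁ (QuotientGroup.mk y))
    have hx0 : η₁ (QuotientGroup.mk x) = QuotientGroup.mk u₀ := hu₀.symm
    have hy0 : η₁ (QuotientGroup.mk y) = QuotientGroup.mk v₀ := hv₀.symm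
    have h1 : ηG (QuotientGroup.mk x) = QuotientGroup.mk u₀ := hηG x u₀ hx0
    have h2 : ηG (QuotientGroup.mk y) = QuotientGroup.mk v₀ := hηG y v₀ hy0
    rw [hx] at h1; rw [hy] at h2
    have hzu : u⁻¹ * u₀ ∈ Subgroup.center H₁ := QuotientGroup.eq.mp h1
    have hzv : v⁻¹ * v₀ ∈ Subgroup.center H₁ := QuotientGroup.eq.mp h2
    rw [restrict_mulEquiv_coe]
    have h3 : (ξ₁ ⟨⁅x, y⁆, hle (mem_commutator_of x y)⟩ : H₁) = ⁅u₀, v₀⁆ :=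
      hA x y u₀ v₀ hx0 hy0
    rw [h3, ← comm_congr_central hzu hzv u v]
    rw [commutatorElement_def, commutatorElement_def]
    group
  · refine ⟨ηG₀, ξ₀, ?_⟩
    intro x y u v hx hy
    obtain ⟨u₀, hu₀⟩ := QuotientGroup.mk_surjective (η₀ (QuotientGroup.mk x))
    obtain ⟨v₀, hv₀⟩ := QuotientGroup.mk_surjective (η₀ (QuotientGroup.mk y))
    have hx0 : η₀ (QuotientGroup.mk x) = QuotientGroup.mk u₀ := hu₀.symm
    have hy0 : η₀ (QuotientGroup.mk y) = QuotientGroup.mk v₀ := hv₀.symm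
    have h1 : ηG₀ (QuotientGroup.mk x) = QuotientGroup.mk u₀ := hηG₀ x u₀ hx0
    have h2 : ηG₀ (QuotientGroup.mk y) = QuotientGroup.mk v₀ := hηG₀ y v₀ hy0
    rw [hx] at h1; rw [hy] at h2
    have hzu : u⁻¹ * u₀ ∈ Subgroup.center H₀ := QuotientGroup.eq.mp h1
    have hzv : v⁻¹ * v₀ ∈ Subgroup.center H₀ := QuotientGroup.eq.mp h2
    have h3 := hcomp2 x y u₀ v₀ hx0 hy0
    rw [h3, ← comm_congr_central hzu hzv u v]
    rw [commutatorElement_def, commutatorElement_def]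
    group
end

section
/- If M and N are isoclinic groups, then M is nilpotent if and only if N is nilpotent. -/
open scoped commutatorElement

/-- isoclinic groups are simultaneously nilpotent. -/
theorem isNilpotent_iff_of_isoclinicGrp (M N : Type*) [Group M] [Group N]
    (h : IsoclinicGrp M N) : Group.IsNilpotent M ↔ Group.IsNilpotent N := by
  obtain ⟨η, -, -⟩ := h
  constructor
  · intro hM
    haveI := hM
    have h1 : Group.IsNilpotent (M ⧸ Subgroup.center M) :=
      nilpotent_quotient_of_nilpotent _
    have h2 : Group.IsNilpotent (N ⧸ Subgroup.center N) :=
      nilpotent_of_mulEquiv η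
    exact of_quotient_center_nilpotent h2
  · intro hN
    haveI := hN
    have h1 : Group.IsNilpotent (N ⧸ Subgroup.center N) :=
      nilpotent_quotient_of_nilpotent _
    have h2 : Group.IsNilpotent (M ⧸ Subgroup.center M) :=
      nilpotent_of_mulEquiv η.symm
    exact of_quotient_center_nilpotent h2
end

section
/- If M and N are isoclinic nilpotent groups and both M and N are nontrivial, then M and N have the same nilpotency class. -/
open scoped commutatorElement
lemma nilpotencyClass_eq_of_mulEquiv {G H : Type*} [Group G] [Group H]
    [Group.IsNilpotent G] [Group.IsNilpotent H] (e : G ≃* H) :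
    Group.nilpotencyClass G = Group.nilpotencyClass H :=
  le_antisymm (nilpotencyClass_le_of_surjective e.symm.toMonoidHom e.symm.surjective)
    (nilpotencyClass_le_of_surjective e.toMonoidHom e.surjective)

/-- nontrivial isoclinic nilpotent groups have the same nilpotency
class. -/
theorem nilpotencyClass_eq_of_isoclinicGrp (M N : Type*) [Group M] [Group N]
    [Group.IsNilpotent M] [Group.IsNilpotent N] [Nontrivial M] [Nontrivial N]
    (h : IsoclinicGrp M N) :
    Group.nilpotencyClass M = Group.nilpotencyClass N := by
  obtain ⟨η, -, -⟩ := h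
  have h1 := nilpotencyClass_eq_of_mulEquiv η
  rw [nilpotencyClass_quotient_center, nilpotencyClass_quotient_center] at h1
  have hM : Group.nilpotencyClass M ≠ 0 := fun hz => by
    rw [nilpotencyClass_zero_iff_subsingleton] at hz
    exact not_subsingleton M hz
  have hN : Group.nilpotencyClass N ≠ 0 := fun hz => by
    rw [nilpotencyClass_zero_iff_subsingleton] at hz
    exact not_subsingleton N hz
  omega
end

section
/- If M and N are isoclinic groups, then M is solvable if and only if N is solvable; moreover, if M and N are both nontrivial and solvable, then M and N have the same derived length. -/
open scoped commutatorElement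

/-- The derived length of a group: the least `n` with `derivedSeries G n = ⊥`. -/
noncomputable def derivedLength (G : Type*) [Group G] : ℕ :=
  sInf {n | derivedSeries G n = ⊥}

/-- `derivedSeries G (n+1)` is the image of the derived series of the
commutator subgroup. -/
lemma derivedSeries_succ_eq_map (G : Type*) [Group G] (n : ℕ) :
    derivedSeries G (n + 1) =
      (derivedSeries (commutator G) n).map (commutator G).subtype := by
  induction n with
  | zero =>
    rw [derivedSeries_one, derivedSeries_zero, ← MonoidHom.range_eq_map,
      Subgroup.range_subtype]
  | succ n ih =>
    rw [derivedSeries_succ, ih, derivedSeries_succ, Subgroup.map_commutator]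

/-- Isomorphic groups have simultaneously vanishing derived series. -/
lemma derivedSeries_bot_iff_of_iso {A B : Type*} [Group A] [Group B]
    (e : A ≃* B) (n : ℕ) : derivedSeries A n = ⊥ ↔ derivedSeries B n = ⊥ := by
  rw [← map_derivedSeries_eq (f := e.toMonoidHom) e.surjective n,
    Subgroup.map_eq_bot_iff_of_injective _ e.injective]

lemma exists_derivedSeries_succ_eq_bot (G : Type*) [Group G] [hG : Group.IsSolvable G] :
    ∃ n, derivedSeries G (n + 1) = ⊥ := by
  obtain ⟨n, hn⟩ := hG.solvable
  exact ⟨n, by rw [derivedSeries_succ, hn, Subgroup.commutator_bot_left]⟩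

lemma top_ne_bot_of_nontrivial (G : Type*) [Group G] [Nontrivial G] :
    (⊤ : Subgroup G) ≠ ⊥ := by
  intro h
  obtain ⟨x, hx⟩ := exists_ne (1 : G)
  exact hx (Subgroup.mem_bot.mp (h ▸ Subgroup.mem_top x))

/-- isoclinic groups are simultaneously solvable, and nontrivial
solvable isoclinic groups have the same derived length. -/
theorem isSolvable_iff_and_derivedLength_eq_of_isoclinicGrp (M N : Type*)
    [Group M] [Group N] (h : IsoclinicGrp M N) :
    (IsSolvable M ↔ IsSolvable N) ∧
      (Nontrivial M → Nontrivial N → IsSolvable M → IsSolvable N →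
        derivedLength M = derivedLength N) := by
  obtain ⟨η, ξ, -⟩ := h
  have key : ∀ n : ℕ, derivedSeries M (n + 1) = ⊥ ↔ derivedSeries N (n + 1) = ⊥ := by
    intro n
    rw [derivedSeries_succ_eq_map M n, derivedSeries_succ_eq_map N n,
      Subgroup.map_eq_bot_iff_of_injective _ (Subgroup.subtype_injective _),
      Subgroup.map_eq_bot_iff_of_injective _ (Subgroup.subtype_injective _),
      derivedSeries_bot_iff_of_iso ξ n]
  constructor
  · constructor
    · intro hM
      obtain ⟨n, hn⟩ := @exists_derivedSeries_succ_eq_bot M _ hM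
      exact ⟨⟨n + 1, (key n).mp hn⟩⟩
    · intro hN
      obtain ⟨n, hn⟩ := @exists_derivedSeries_succ_eq_bot N _ hN
      exact ⟨⟨n + 1, (key n).mpr hn⟩⟩
  · intro hM hN _ _
    unfold derivedLength
    congr 1
    ext n
    cases n with
    | zero =>
      simp only [Set.mem_setOf_eq, derivedSeries_zero]
      exact iff_of_false (top_ne_bot_of_nontrivial M) (top_ne_bot_of_nontrivial N)
    | succ n => exact key n
end
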